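/- arXiv:1108.5357 — 3 statements merged into one kernel-verified Lean document; each statement's English description precedes it below -/
import Mathlib

section
/- Let ρ_AB be a positive semi-definite operator on a finite-dimensional Hilbert space H_A ⊗ H_B of the form ρ_AB = Σ_k ρ_A^k ⊗ |k⟩⟨k|_B, where the ρ_A^k are positive semi-definite and the |k⟩_B are mutually orthogonal unit vectors. Then the alternative conditional max-entropy H_0(A|B)_ρ := sup over density operators σ_B of log tr[ρ_AB^0 (1_A ⊗ σ_B)] equals max_k H_0(A)_{ρ^k} = max_k log rank(ρ_A^k), where ρ_AB^0 denotes the projector onto the support of ρ_AB. -/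
open Matrix Kronecker BigOperators
open scoped ComplexOrder

noncomputable section
attribute [local instance] Classical.propDecidable

/-- Square root of a positive semidefinite matrix (junk value `0` otherwise). -/
def msqrt {n : Type*} [Fintype n] [DecidableEq n] (ρ : Matrix n n ℂ) : Matrix n n ℂ :=
  if h : ρ.PosSemidef then
    (h.1.eigenvectorUnitary : Matrix n n ℂ) *
      Matrix.diagonal (fun i => ((Real.sqrt (h.1.eigenvalues i) : ℝ) : ℂ)) *
      star (h.1.eigenvectorUnitary : Matrix n n ℂ)
  else 0

/-- The trace norm `‖M‖₁ = tr √(Mᴴ M)` of a (possibly rectangular) complex matrix. -/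
def traceNorm {n m : Type*} [Fintype n] [Fintype m] [DecidableEq m] (M : Matrix n m ℂ) : ℝ :=
  (msqrt (Mᴴ * M)).trace.re

/-- The Hilbert-Schmidt (Frobenius) norm of a complex matrix. -/
def frobNorm {n m : Type*} [Fintype n] [Fintype m] (M : Matrix n m ℂ) : ℝ :=
  Real.sqrt (∑ i, ∑ j, ‖M i j‖ ^ 2)

/-- A density operator: positive semidefinite with unit trace. -/
def IsDensity {n : Type*} [Fintype n] (ρ : Matrix n n ℂ) : Prop :=
  ρ.PosSemidef ∧ ρ.trace = 1

/-- The projector onto the support of a Hermitian matrix (junk value `0` otherwise). -/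
def suppProj {n : Type*} [Fintype n] [DecidableEq n] (ρ : Matrix n n ℂ) : Matrix n n ℂ :=
  if h : ρ.IsHermitian then
    (h.eigenvectorUnitary : Matrix n n ℂ) *
      Matrix.diagonal (fun i => if h.eigenvalues i = 0 then (0 : ℂ) else 1) *
      star (h.eigenvectorUnitary : Matrix n n ℂ)
  else 0

/-- The von Neumann entropy (base 2) of a Hermitian matrix (junk value `0` otherwise). -/
def vnEntropy {n : Type*} [Fintype n] [DecidableEq n] (ρ : Matrix n n ℂ) : ℝ :=
  if h : ρ.IsHermitian then -∑ i, h.eigenvalues i * Real.logb 2 (h.eigenvalues i) else 0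

/-- Partial trace over the second tensor factor. -/
def ptr2 {X Y : Type*} [Fintype X] [Fintype Y] (ρ : Matrix (X × Y) (X × Y) ℂ) :
    Matrix X X ℂ :=
  Matrix.of fun x x' => ∑ y, ρ (x, y) (x', y)

/-- Partial trace over the first tensor factor. -/
def ptr1 {X Y : Type*} [Fintype X] [Fintype Y] (ρ : Matrix (X × Y) (X × Y) ℂ) :
    Matrix Y Y ℂ :=
  Matrix.of fun y y' => ∑ x, ρ (x, y) (x, y')

/-- The rank-one projector `|ψ⟩⟨ψ|` associated to a vector `ψ`. -/
def pureMat {n : Type*} (ψ : n → ℂ) : Matrix n n ℂ :=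
  Matrix.vecMulVec ψ (star ψ)

/-- `ψ` is a unit vector. -/
def IsUnit' {n : Type*} [Fintype n] (ψ : n → ℂ) : Prop := ∑ z, ‖ψ z‖ ^ 2 = 1

/-- The binary entropy function with logarithms in base 2. -/
def binEnt (x : ℝ) : ℝ := -(x * Real.logb 2 x) - (1 - x) * Real.logb 2 (1 - x)

/-- The entanglement of formation of a bipartite state, as the infimum over pure-state
decompositions of the average entropy of entanglement. -/
def EoF {A B : Type*} [Fintype A] [Fintype B] [DecidableEq A]
    (ρ : Matrix (A × B) (A × B) ℂ) : ℝ :=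
  sInf { x | ∃ (m : ℕ) (p : Fin m → ℝ) (ψ : Fin m → (A × B) → ℂ),
    (∀ i, 0 < p i) ∧ (∀ i, IsUnit' (ψ i)) ∧
    ρ = ∑ i, (p i : ℂ) • pureMat (ψ i) ∧
    x = ∑ i, p i * vnEntropy (ptr2 (pureMat (ψ i))) }

/-- The alternative conditional max-entropy
`H₀(A|B)_ρ = sup_σ log tr[ρ⁰ (1 ⊗ σ)]`, supremum over density operators `σ` on `B`. -/
def H0cond {A B : Type*} [Fintype A] [Fintype B] [DecidableEq A] [DecidableEq B]
    (ρ : Matrix (A × B) (A × B) ℂ) : ℝ :=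
  sSup { x | ∃ σ : Matrix B B ℂ, IsDensity σ ∧
    x = Real.logb 2 ((suppProj ρ * ((1 : Matrix A A ℂ) ⊗ₖ σ)).trace.re) }

/-- Separability of a bipartite state. -/
def IsSep {A B : Type*} [Fintype A] [Fintype B] (ρ : Matrix (A × B) (A × B) ℂ) : Prop :=
  ∃ (N : ℕ) (q : Fin N → ℝ) (α : Fin N → Matrix A A ℂ) (β : Fin N → Matrix B B ℂ),
    (∀ i, 0 ≤ q i) ∧ (∀ i, IsDensity (α i)) ∧ (∀ i, IsDensity (β i)) ∧
    ρ = ∑ i, (q i : ℂ) • (α i ⊗ₖ β i)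

/-- `n`-fold tensor power of a matrix. -/
def tensorPow {X : Type*} (ρ : Matrix X X ℂ) (n : ℕ) :
    Matrix (Fin n → X) (Fin n → X) ℂ :=
  Matrix.of fun f g => ∏ i, ρ (f i) (g i)


section H0Aux

variable {n : Type*} [Fintype n] [DecidableEq n]

private lemma sum_mulVec' {ι : Type*} (s : Finset ι) (f : ι → Matrix n n ℂ) (x : n → ℂ) :
    (∑ i ∈ s, f i) *ᵥ x = ∑ i ∈ s, f i *ᵥ x := by
  ext j
  simp only [Matrix.mulVec, dotProduct, Matrix.sum_apply, Finset.sum_apply,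
    Finset.sum_mul]
  exact Finset.sum_comm

private lemma ext_mulVec' {M N : Matrix n n ℂ} (h : ∀ x, M *ᵥ x = N *ᵥ x) : M = N := by
  ext i j
  have := congrFun (h (Pi.single j 1)) i
  simpa [Matrix.mulVec_single] using this

/-- sum of psd is psd -/
private lemma posSemidef_sum' {ι : Type*} (s : Finset ι) (f : ι → Matrix n n ℂ)
    (h : ∀ i ∈ s, (f i).PosSemidef) : (∑ i ∈ s, f i).PosSemidef := by
  classical
  induction s using Finset.induction with
  | empty => simpa using Matrix.PosSemidef.zero
  | insert _ _ hnotmem ih =>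
    rename_i a s'
    rw [Finset.sum_insert hnotmem]
    exact (h a (Finset.mem_insert_self a s')).add
      (ih fun i hi => h i (Finset.mem_insert_of_mem hi))

private lemma psd_trace_nonneg {M : Matrix n n ℂ} (hM : M.PosSemidef) : 0 ≤ M.trace := by
  apply Finset.sum_nonneg
  intro i _
  have := hM.dotProduct_mulVec_nonneg (Pi.single i 1)
  simpa [Matrix.mulVec_single, dotProduct, Pi.single_apply] using this

open scoped MatrixOrder in
private lemma psd_trace_mul_nonneg {M N : Matrix n n ℂ} (hM : M.PosSemidef)
    (hN : N.PosSemidef) : 0 ≤ (M * N).trace := by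
  have h3 : (CFC.sqrt M * N * CFC.sqrt M).PosSemidef := by
    have := hN.conjTranspose_mul_mul_same (CFC.sqrt M)
    rwa [(Matrix.nonneg_iff_posSemidef.mp (CFC.sqrt_nonneg M)).1.eq] at this
  have h4 := psd_trace_nonneg h3
  rwa [Matrix.trace_mul_cycle, CFC.sqrt_mul_sqrt_self M (Matrix.nonneg_iff_posSemidef.mpr hM)] at h4

/-- The key properties of suppProj for a psd matrix. -/
private lemma suppProj_isHermitian {ρ : Matrix n n ℂ} (hρ : ρ.PosSemidef) :
    (suppProj ρ).IsHermitian := by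
  rw [suppProj, dif_pos hρ.1]
  apply Matrix.isHermitian_mul_mul_conjTranspose
  ext i j
  simp only [Matrix.conjTranspose_apply, Matrix.diagonal_apply]
  split_ifs with h1 h2 h2 <;> simp_all <;> tauto

private lemma suppProj_mul_self {ρ : Matrix n n ℂ} (hρ : ρ.PosSemidef) :
    suppProj ρ * suppProj ρ = suppProj ρ := by
  rw [suppProj, dif_pos hρ.1]
  set U := (hρ.1.eigenvectorUnitary : Matrix n n ℂ)
  have hU : star U * U = 1 := Unitary.coe_star_mul_self _
  set D := Matrix.diagonal (fun i => if hρ.1.eigenvalues i = 0 then (0 : ℂ) else 1) with hD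
  have hDD : D * D = D := by
    rw [hD, Matrix.diagonal_mul_diagonal]
    have : ∀ i, ((if hρ.1.eigenvalues i = 0 then (0 : ℂ) else 1) *
        if hρ.1.eigenvalues i = 0 then (0 : ℂ) else 1) =
        if hρ.1.eigenvalues i = 0 then (0 : ℂ) else 1 := by
      intro i; split_ifs <;> simp
    simp only [this]
  calc U * D * star U * (U * D * star U) = U * (D * ((star U * U) * (D * star U))) := by
        simp only [Matrix.mul_assoc]
      _ = U * D * star U := by
        rw [hU, Matrix.one_mul]
        simp only [← Matrix.mul_assoc]
        rw [mul_assoc U D D, hDD]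

private lemma suppProj_mul_self_eq {ρ : Matrix n n ℂ} (hρ : ρ.PosSemidef) :
    suppProj ρ * ρ = ρ := by
  set U := (hρ.1.eigenvectorUnitary : Matrix n n ℂ) with hUdef
  have hU : star U * U = 1 := Unitary.coe_star_mul_self _
  set D := Matrix.diagonal (fun i => if hρ.1.eigenvalues i = 0 then (0 : ℂ) else 1) with hD
  set E : Matrix n n ℂ := Matrix.diagonal (RCLike.ofReal ∘ hρ.1.eigenvalues) with hE
  have hρeq : ρ = U * E * star U := hρ.1.spectral_theorem
  have hP : suppProj ρ = U * D * star U := by rw [suppProj, dif_pos hρ.1]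
  have hDE : D * E = E := by
    rw [hD, hE, Matrix.diagonal_mul_diagonal]
    have : ∀ i, ((if hρ.1.eigenvalues i = 0 then (0 : ℂ) else 1) *
        (RCLike.ofReal ∘ hρ.1.eigenvalues) i) = (RCLike.ofReal ∘ hρ.1.eigenvalues) i := by
      intro i
      by_cases h : hρ.1.eigenvalues i = 0 <;> simp [h]
    simp only [this]
  have key : U * D * star U * (U * E * star U) = U * E * star U := by
    calc U * D * star U * (U * E * star U) = U * (D * ((star U * U) * (E * star U))) := by
          simp only [Matrix.mul_assoc]
      _ = U * E * star U := by
          rw [hU, Matrix.one_mul]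
          simp only [← Matrix.mul_assoc]
          rw [mul_assoc U D E, hDE]
  calc suppProj ρ * ρ = U * D * star U * (U * E * star U) := by rw [hP, ← hρeq]
    _ = U * E * star U := key
    _ = ρ := hρeq.symm

private lemma suppProj_kernel {ρ : Matrix n n ℂ} (hρ : ρ.PosSemidef) (x : n → ℂ)
    (hx : ρ *ᵥ x = 0) : suppProj ρ *ᵥ x = 0 := by
  rw [suppProj, dif_pos hρ.1]
  set U := (hρ.1.eigenvectorUnitary : Matrix n n ℂ) with hUdef
  have hU : star U * U = 1 := Unitary.coe_star_mul_self _
  set D := Matrix.diagonal (fun i => if hρ.1.eigenvalues i = 0 then (0 : ℂ) else 1) with hD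
  set E : Matrix n n ℂ := Matrix.diagonal (RCLike.ofReal ∘ hρ.1.eigenvalues) with hE
  set y := star U *ᵥ x with hy
  have hρeq : ρ = U * E * star U := hρ.1.spectral_theorem
  have h1 : E *ᵥ y = 0 := by
    have h0 : star U *ᵥ ((U * E * star U) *ᵥ x) = 0 := by
      rw [← hρeq, hx, Matrix.mulVec_zero]
    have h0' : star U * (U * E * star U) = E * star U := by
      simp only [← Matrix.mul_assoc]
      rw [hU, Matrix.one_mul]
    rw [Matrix.mulVec_mulVec, h0'] at h0
    rw [hy, Matrix.mulVec_mulVec]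
    exact h0
  have h2 : D *ᵥ y = 0 := by
    funext i
    have h1i := congrFun h1 i
    simp only [hE, hD, Matrix.mulVec_diagonal, Function.comp_apply, Pi.zero_apply] at h1i ⊢
    by_cases h : hρ.1.eigenvalues i = 0
    · simp [h]
    · have : ((hρ.1.eigenvalues i : ℝ) : ℂ) ≠ 0 := by
        simpa using h
      simp only [h, if_neg, if_false, one_mul]
      exact (mul_eq_zero.mp h1i).resolve_left this
  calc (U * D * star U) *ᵥ x = U *ᵥ (D *ᵥ y) := by
        simp only [hy, Matrix.mulVec_mulVec, Matrix.mul_assoc]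
      _ = 0 := by rw [h2, Matrix.mulVec_zero]

private lemma suppProj_trace {ρ : Matrix n n ℂ} (hρ : ρ.PosSemidef) :
    (suppProj ρ).trace = (ρ.rank : ℂ) := by
  rw [suppProj, dif_pos hρ.1]
  set U := (hρ.1.eigenvectorUnitary : Matrix n n ℂ)
  have hU : star U * U = 1 := Unitary.coe_star_mul_self _
  set D := Matrix.diagonal (fun i => if hρ.1.eigenvalues i = 0 then (0 : ℂ) else 1) with hD
  have h1 : (U * D * star U).trace = D.trace := by
    rw [Matrix.trace_mul_cycle, hU, Matrix.one_mul]
  rw [h1, hD, Matrix.trace_diagonal, hρ.1.rank_eq_card_non_zero_eigs]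
  rw [Fintype.card_subtype]
  rw [Finset.card_eq_sum_ones]
  push_cast
  rw [Finset.sum_filter]
  congr 1
  funext i
  split_ifs <;> simp_all

/-- Uniqueness of the support projection. -/
private lemma suppProj_unique {ρ P : Matrix n n ℂ} (hρ : ρ.PosSemidef)
    (h1 : P.IsHermitian) (h2 : P * P = P) (h3 : P * ρ = ρ)
    (h4 : ∀ x, ρ *ᵥ x = 0 → P *ᵥ x = 0) : suppProj ρ = P := by
  set Q := suppProj ρ with hQdef
  have hQ1 : Q.IsHermitian := suppProj_isHermitian hρ
  have hQ2 : Q * Q = Q := suppProj_mul_self hρ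
  have hQ3 : Q * ρ = ρ := suppProj_mul_self_eq hρ
  have hQ4 : ∀ x, ρ *ᵥ x = 0 → Q *ᵥ x = 0 := suppProj_kernel hρ
  -- kernels of P and Q both equal the kernel of ρ
  have hPk : ∀ x, P *ᵥ x = 0 → ρ *ᵥ x = 0 := by
    intro x hx
    have hρP : ρ * P = ρ := by
      calc ρ * P = (Pᴴ * ρᴴ)ᴴ := by simp [Matrix.conjTranspose_mul]
        _ = (P * ρ)ᴴ := by rw [h1.eq, hρ.1.eq]
        _ = ρᴴ := by rw [h3]
        _ = ρ := hρ.1.eq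
    calc ρ *ᵥ x = (ρ * P) *ᵥ x := by rw [hρP]
      _ = ρ *ᵥ (P *ᵥ x) := (Matrix.mulVec_mulVec _ _ _).symm
      _ = 0 := by rw [hx, Matrix.mulVec_zero]
  have hQk : ∀ x, Q *ᵥ x = 0 → ρ *ᵥ x = 0 := by
    intro x hx
    have hρQ : ρ * Q = ρ := by
      calc ρ * Q = (Qᴴ * ρᴴ)ᴴ := by simp [Matrix.conjTranspose_mul]
        _ = (Q * ρ)ᴴ := by rw [hQ1.eq, hρ.1.eq]
        _ = ρᴴ := by rw [hQ3]
        _ = ρ := hρ.1.eq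
    calc ρ *ᵥ x = (ρ * Q) *ᵥ x := by rw [hρQ]
      _ = ρ *ᵥ (Q *ᵥ x) := (Matrix.mulVec_mulVec _ _ _).symm
      _ = 0 := by rw [hx, Matrix.mulVec_zero]
  have hQP : Q * P = Q := by
    apply ext_mulVec'
    intro x
    have hx : P *ᵥ (x - P *ᵥ x) = 0 := by
      rw [Matrix.mulVec_sub]
      have : P *ᵥ (P *ᵥ x) = P *ᵥ x := by
        rw [Matrix.mulVec_mulVec, h2]
      rw [this, sub_self]
    have : Q *ᵥ (x - P *ᵥ x) = 0 := hQ4 _ (hPk _ hx)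
    rw [Matrix.mulVec_sub] at this
    have h5 : Q *ᵥ x = Q *ᵥ (P *ᵥ x) := by
      have := sub_eq_zero.mp this
      exact this
    rw [← Matrix.mulVec_mulVec, ← h5]
  have hPQ : P * Q = P := by
    apply ext_mulVec'
    intro x
    have hx : Q *ᵥ (x - Q *ᵥ x) = 0 := by
      rw [Matrix.mulVec_sub]
      have : Q *ᵥ (Q *ᵥ x) = Q *ᵥ x := by
        rw [Matrix.mulVec_mulVec, hQ2]
      rw [this, sub_self]
    have : P *ᵥ (x - Q *ᵥ x) = 0 := h4 _ (hQk _ hx)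
    rw [Matrix.mulVec_sub] at this
    have h5 : P *ᵥ x = P *ᵥ (Q *ᵥ x) := sub_eq_zero.mp this
    rw [← Matrix.mulVec_mulVec, ← h5]
  calc Q = Q * P := hQP.symm
    _ = (Pᴴ * Qᴴ)ᴴ := by simp [Matrix.conjTranspose_mul]
    _ = (P * Q)ᴴ := by rw [h1.eq, hQ1.eq]
    _ = Pᴴ := by rw [hPQ]
    _ = P := h1.eq

end H0Aux


section H0Aux2

variable {A B : Type*} [Fintype A] [Fintype B] [DecidableEq A] [DecidableEq B]

private lemma logb_nat_mono {m n : ℕ} (h : m ≤ n) :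
    Real.logb 2 (m : ℝ) ≤ Real.logb 2 (n : ℝ) := by
  rcases Nat.eq_zero_or_pos m with rfl | hm
  · simp only [Nat.cast_zero, Real.logb_zero]
    rcases Nat.eq_zero_or_pos n with rfl | hn
    · simp
    · exact Real.logb_nonneg one_lt_two (by exact_mod_cast hn)
  · exact Real.logb_le_logb_of_le one_lt_two (by exact_mod_cast hm) (by exact_mod_cast h)

private lemma pureMat_conjTranspose (ψ : B → ℂ) : (pureMat ψ)ᴴ = pureMat ψ := by
  ext i j
  simp only [Matrix.conjTranspose_apply, pureMat, Matrix.vecMulVec_apply, Pi.star_apply,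
    star_mul', star_star]
  ring

private lemma pureMat_posSemidef (ψ : B → ℂ) : (pureMat ψ).PosSemidef := by
  apply Matrix.PosSemidef.of_dotProduct_mulVec_nonneg
  · exact pureMat_conjTranspose ψ
  · intro x
    have key : star x ⬝ᵥ (pureMat ψ *ᵥ x) = star (star ψ ⬝ᵥ x) * (star ψ ⬝ᵥ x) := by
      simp only [dotProduct, Matrix.mulVec, pureMat, Matrix.vecMulVec_apply,
        Pi.star_apply, star_sum, star_mul', star_star]
      rw [Finset.sum_mul]
      apply Finset.sum_congr rfl
      intro i _
      rw [Finset.mul_sum, Finset.mul_sum]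
      apply Finset.sum_congr rfl
      intro j _
      ring
    rw [key]
    exact star_mul_self_nonneg _

private lemma dotProduct_pureMat_mulVec (ψ x y : B → ℂ) :
    star y ⬝ᵥ (pureMat ψ *ᵥ x) = (star y ⬝ᵥ ψ) * (star ψ ⬝ᵥ x) := by
  simp only [dotProduct, Matrix.mulVec, pureMat, Matrix.vecMulVec_apply, Pi.star_apply]
  rw [Finset.sum_mul]
  apply Finset.sum_congr rfl
  intro i _
  rw [Finset.mul_sum, Finset.mul_sum]
  apply Finset.sum_congr rfl
  intro j _
  ring

private lemma pureMat_mul_pureMat (ψ φ : B → ℂ) :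
    pureMat ψ * pureMat φ
      = (∑ b, (starRingEnd ℂ) (ψ b) * φ b) • Matrix.vecMulVec ψ (star φ) := by
  ext i j
  simp only [Matrix.mul_apply, pureMat, Matrix.vecMulVec_apply, Matrix.smul_apply,
    smul_eq_mul, Pi.star_apply, starRingEnd_apply, Finset.sum_mul]
  apply Finset.sum_congr rfl
  intro b _
  ring

private lemma trace_pureMat_mul (ψ : B → ℂ) (σ : Matrix B B ℂ) :
    (pureMat ψ * σ).trace = star ψ ⬝ᵥ (σ *ᵥ ψ) := by
  simp only [Matrix.trace, Matrix.diag, Matrix.mul_apply, pureMat, Matrix.vecMulVec_apply,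
    dotProduct, Matrix.mulVec, Pi.star_apply]
  rw [Finset.sum_comm]
  apply Finset.sum_congr rfl
  intro c _
  rw [Finset.mul_sum]
  apply Finset.sum_congr rfl
  intro b _
  ring

private lemma kron_pure_mulVec (M : Matrix A A ℂ) (ψ : B → ℂ) (x : A × B → ℂ) (a : A) (b : B) :
    ((M ⊗ₖ pureMat ψ) *ᵥ x) (a, b)
      = ψ b * (M *ᵥ (fun a' => ∑ b', (starRingEnd ℂ) (ψ b') * x (a', b'))) a := by
  simp only [Matrix.mulVec, dotProduct, Fintype.sum_prod_type,
    Matrix.kroneckerMap_apply, pureMat, Matrix.vecMulVec_apply, Pi.star_apply,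
    starRingEnd_apply, Finset.mul_sum]
  apply Finset.sum_congr rfl
  intro a' _
  apply Finset.sum_congr rfl
  intro b' _
  ring

private lemma kron_pure_isHermitian {M : Matrix A A ℂ} (hM : M.IsHermitian) (ψ : B → ℂ) :
    (M ⊗ₖ pureMat ψ).IsHermitian := by
  show (M ⊗ₖ pureMat ψ)ᴴ = M ⊗ₖ pureMat ψ
  ext ⟨a, b⟩ ⟨a', b'⟩
  simp only [Matrix.conjTranspose_apply, Matrix.kroneckerMap_apply, star_mul']
  calc star (M a' a) * star (pureMat ψ b' b) = Mᴴ a a' * (pureMat ψ)ᴴ b b' := rfl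
    _ = M a a' * pureMat ψ b b' := by rw [hM.eq, pureMat_conjTranspose]

private lemma kron_pure_posSemidef {M : Matrix A A ℂ} (hM : M.PosSemidef) (ψ : B → ℂ) :
    (M ⊗ₖ pureMat ψ).PosSemidef := by
  refine Matrix.PosSemidef.of_dotProduct_mulVec_nonneg (kron_pure_isHermitian hM.1 ψ) fun x => ?_
  have key : star x ⬝ᵥ ((M ⊗ₖ pureMat ψ) *ᵥ x)
      = star (fun a' => ∑ b', (starRingEnd ℂ) (ψ b') * x (a', b'))
          ⬝ᵥ (M *ᵥ (fun a' => ∑ b', (starRingEnd ℂ) (ψ b') * x (a', b'))) := by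
    have hrw : ∀ p : A × B, ((M ⊗ₖ pureMat ψ) *ᵥ x) p
        = ψ p.2 * (M *ᵥ (fun a' => ∑ b', (starRingEnd ℂ) (ψ b') * x (a', b'))) p.1 := by
      rintro ⟨a, b⟩
      exact kron_pure_mulVec M ψ x a b
    simp only [dotProduct, hrw, Fintype.sum_prod_type, Pi.star_apply, star_sum,
      star_mul', starRingEnd_apply, star_star]
    apply Finset.sum_congr rfl
    intro a _
    rw [Finset.sum_mul]
    apply Finset.sum_congr rfl
    intro b _
    ring
  rw [key]
  exact hM.dotProduct_mulVec_nonneg _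

end H0Aux2


/-- For a quantum-classical operator `ρ_AB = Σ_k ρ_A^k ⊗ |k⟩⟨k|_B` (with the
`|k⟩_B` mutually orthogonal unit vectors and each `ρ_A^k` positive semidefinite), the alternative
conditional max-entropy equals `max_k log rank(ρ_A^k)`. -/
theorem H0cond_of_qc {A B K : Type*} [Fintype A] [Fintype B] [Fintype K] [Nonempty K]
    [DecidableEq A] [DecidableEq B] [DecidableEq K]
    (ρA : K → Matrix A A ℂ) (hρA : ∀ k, (ρA k).PosSemidef)
    (v : K → B → ℂ)
    (hv : ∀ k k', ∑ i, (starRingEnd ℂ) (v k i) * v k' i = if k = k' then 1 else 0) :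
    H0cond (∑ k, (ρA k) ⊗ₖ pureMat (v k)) =
      Finset.univ.sup' Finset.univ_nonempty
        (fun k => Real.logb 2 ((ρA k).rank : ℝ)) := by
  classical
  have hvne : ∀ k, ∃ b, v k b ≠ 0 := by
    intro k
    by_contra h
    push_neg at h
    have h1 := hv k k
    simp only [if_pos rfl, h, map_zero, zero_mul, Finset.sum_const_zero] at h1
    exact zero_ne_one h1
  have hterm : ∀ k, ((ρA k) ⊗ₖ pureMat (v k)).PosSemidef :=
    fun k => kron_pure_posSemidef (hρA k) (v k)
  have hρpsd : (∑ k, (ρA k) ⊗ₖ pureMat (v k)).PosSemidef :=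
    posSemidef_sum' _ _ (fun k _ => hterm k)
  have hww : ∀ k k', pureMat (v k) * pureMat (v k') = if k = k' then pureMat (v k) else 0 := by
    intro k k'
    rw [pureMat_mul_pureMat, hv k k']
    split_ifs with h
    · subst h; rw [one_smul]; rfl
    · rw [zero_smul]
  have hsupp : suppProj (∑ k, (ρA k) ⊗ₖ pureMat (v k))
      = ∑ k, suppProj (ρA k) ⊗ₖ pureMat (v k) := by
    apply suppProj_unique hρpsd
    · show (∑ k, suppProj (ρA k) ⊗ₖ pureMat (v k))ᴴ = _
      rw [Matrix.conjTranspose_sum]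
      exact Finset.sum_congr rfl fun k _ =>
        (kron_pure_isHermitian (suppProj_isHermitian (hρA k)) (v k)).eq
    · rw [Finset.sum_mul_sum]
      have hcross : ∀ k k',
          (suppProj (ρA k) ⊗ₖ pureMat (v k)) * (suppProj (ρA k') ⊗ₖ pureMat (v k'))
          = if k = k' then suppProj (ρA k) ⊗ₖ pureMat (v k) else 0 := by
        intro k k'
        rw [← Matrix.mul_kronecker_mul, hww]
        split_ifs with h
        · subst h; rw [suppProj_mul_self (hρA k)]
        · rw [Matrix.kronecker_zero]
      simp only [hcross, Finset.sum_ite_eq, Finset.mem_univ, if_true]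
    · rw [Finset.sum_mul_sum]
      have hcross : ∀ k k',
          (suppProj (ρA k) ⊗ₖ pureMat (v k)) * ((ρA k') ⊗ₖ pureMat (v k'))
          = if k = k' then (ρA k) ⊗ₖ pureMat (v k) else 0 := by
        intro k k'
        rw [← Matrix.mul_kronecker_mul, hww]
        split_ifs with h
        · subst h; rw [suppProj_mul_self_eq (hρA k)]
        · rw [Matrix.kronecker_zero]
      simp only [hcross, Finset.sum_ite_eq, Finset.mem_univ, if_true]
    · intro x hx
      have hterm0 : ∀ k, ((ρA k ⊗ₖ pureMat (v k)) *ᵥ x) = 0 := by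
        have hsum : ∑ k, star x ⬝ᵥ ((ρA k ⊗ₖ pureMat (v k)) *ᵥ x) = 0 := by
          have h1 : star x ⬝ᵥ ((∑ k, (ρA k) ⊗ₖ pureMat (v k)) *ᵥ x) = 0 := by
            rw [hx, dotProduct_zero]
          rw [sum_mulVec'] at h1
          rw [← h1]
          simp only [dotProduct, Finset.sum_apply, Finset.mul_sum]
          exact Finset.sum_comm
        intro k
        have hk0 : star x ⬝ᵥ ((ρA k ⊗ₖ pureMat (v k)) *ᵥ x) = 0 :=
          (Finset.sum_eq_zero_iff_of_nonneg (fun k _ => (hterm k).dotProduct_mulVec_nonneg x)).mp hsum k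
            (Finset.mem_univ k)
        exact ((hterm k).dotProduct_mulVec_zero_iff x).mp hk0
      rw [sum_mulVec']
      apply Finset.sum_eq_zero
      intro k _
      have hc : (ρA k) *ᵥ (fun a' => ∑ b', (starRingEnd ℂ) (v k b') * x (a', b')) = 0 := by
        obtain ⟨b₀, hb₀⟩ := hvne k
        funext a'
        have h2 := congrFun (hterm0 k) (a', b₀)
        rw [kron_pure_mulVec] at h2
        simp only [Pi.zero_apply] at h2 ⊢
        exact (mul_eq_zero.mp h2).resolve_left hb₀
      have hPc := suppProj_kernel (hρA k) _ hc
      funext ab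
      obtain ⟨a, b⟩ := ab
      rw [Pi.zero_apply, kron_pure_mulVec, hPc, Pi.zero_apply, mul_zero]
  have htr : ∀ σ : Matrix B B ℂ,
      ((suppProj (∑ k, (ρA k) ⊗ₖ pureMat (v k)) * ((1 : Matrix A A ℂ) ⊗ₖ σ)).trace)
        = ∑ k, ((ρA k).rank : ℂ) * (star (v k) ⬝ᵥ (σ *ᵥ v k)) := by
    intro σ
    rw [hsupp, Finset.sum_mul, Matrix.trace_sum]
    apply Finset.sum_congr rfl
    intro k _
    rw [← Matrix.mul_kronecker_mul, Matrix.mul_one, Matrix.trace_kronecker,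
      suppProj_trace (hρA k), trace_pureMat_mul]
  have htre : ∀ σ : Matrix B B ℂ,
      ((suppProj (∑ k, (ρA k) ⊗ₖ pureMat (v k)) * ((1 : Matrix A A ℂ) ⊗ₖ σ)).trace).re
        = ∑ k, ((ρA k).rank : ℝ) * (star (v k) ⬝ᵥ (σ *ᵥ v k)).re := by
    intro σ
    rw [htr σ, Complex.re_sum]
    apply Finset.sum_congr rfl
    intro k _
    simp [Complex.mul_re]
  have hq0 : ∀ (σ : Matrix B B ℂ), σ.PosSemidef →
      ∀ k, 0 ≤ (star (v k) ⬝ᵥ (σ *ᵥ v k)).re :=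
    fun σ hσ k => by simpa using (Complex.le_def.mp (hσ.dotProduct_mulVec_nonneg (v k))).1
  have hqsum : ∀ σ : Matrix B B ℂ, IsDensity σ →
      ∑ k, (star (v k) ⬝ᵥ (σ *ᵥ v k)).re ≤ 1 := by
    intro σ hσ
    have hWH : (∑ k, pureMat (v k))ᴴ = ∑ k, pureMat (v k) := by
      rw [Matrix.conjTranspose_sum]
      exact Finset.sum_congr rfl fun k _ => pureMat_conjTranspose (v k)
    have hWW : (∑ k, pureMat (v k)) * (∑ k, pureMat (v k)) = ∑ k, pureMat (v k) := by
      rw [Finset.sum_mul_sum]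
      simp only [hww, Finset.sum_ite_eq, Finset.mem_univ, if_true]
    have hWpsd : ((1 : Matrix B B ℂ) - ∑ k, pureMat (v k)).PosSemidef := by
      have h1 : ((1 : Matrix B B ℂ) - ∑ k, pureMat (v k))ᴴ
            * ((1 : Matrix B B ℂ) - ∑ k, pureMat (v k))
          = (1 : Matrix B B ℂ) - ∑ k, pureMat (v k) := by
        rw [Matrix.conjTranspose_sub, Matrix.conjTranspose_one, hWH, Matrix.sub_mul,
          Matrix.mul_sub, Matrix.mul_sub]
        simp only [Matrix.one_mul, Matrix.mul_one]
        rw [hWW]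
        abel
      have h2 := Matrix.posSemidef_conjTranspose_mul_self
        ((1 : Matrix B B ℂ) - ∑ k, pureMat (v k))
      rwa [h1] at h2
    have h2 : 0 ≤ (((1 : Matrix B B ℂ) - ∑ k, pureMat (v k)) * σ).trace :=
      psd_trace_mul_nonneg hWpsd hσ.1
    rw [Matrix.sub_mul, Matrix.trace_sub, Matrix.one_mul] at h2
    have h3 : ((∑ k, pureMat (v k)) * σ).trace.re ≤ σ.trace.re := by
      have h4 := (Complex.le_def.mp h2).1
      simp only [Complex.zero_re, Complex.sub_re] at h4
      linarith
    rw [Finset.sum_mul, Matrix.trace_sum, Complex.re_sum, hσ.2, Complex.one_re] at h3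
    calc ∑ k, (star (v k) ⬝ᵥ (σ *ᵥ v k)).re
        = ∑ k, ((pureMat (v k)) * σ).trace.re :=
          Finset.sum_congr rfl fun k _ => by rw [trace_pureMat_mul]
      _ ≤ 1 := h3
  obtain ⟨k₁, -, hk₁⟩ := Finset.exists_mem_eq_sup' Finset.univ_nonempty (fun k => (ρA k).rank)
  have hrankmax : ∀ k, (ρA k).rank ≤ (ρA k₁).rank := by
    intro k
    rw [← hk₁]
    exact Finset.le_sup' (fun k => (ρA k).rank) (Finset.mem_univ k)
  have hMR : Finset.univ.sup' Finset.univ_nonempty (fun k => Real.logb 2 ((ρA k).rank : ℝ))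
      = Real.logb 2 (((ρA k₁).rank : ℝ)) := by
    apply le_antisymm
    · exact Finset.sup'_le _ _ fun k _ => logb_nat_mono (hrankmax k)
    · exact Finset.le_sup' (fun k => Real.logb 2 ((ρA k).rank : ℝ)) (Finset.mem_univ k₁)
  have hub : ∀ σ : Matrix B B ℂ, IsDensity σ →
      Real.logb 2 (((suppProj (∑ k, (ρA k) ⊗ₖ pureMat (v k))
        * ((1 : Matrix A A ℂ) ⊗ₖ σ)).trace).re) ≤ Real.logb 2 (((ρA k₁).rank : ℝ)) := by
    intro σ hσ
    have htval := htre σ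
    set t := ((suppProj (∑ k, (ρA k) ⊗ₖ pureMat (v k))
      * ((1 : Matrix A A ℂ) ⊗ₖ σ)).trace).re with ht
    have ht0 : 0 ≤ t := by
      rw [htval]
      apply Finset.sum_nonneg
      intro k _
      exact mul_nonneg (by positivity) (hq0 σ hσ.1 k)
    have htR : t ≤ ((ρA k₁).rank : ℝ) := by
      rw [htval]
      calc ∑ k, ((ρA k).rank : ℝ) * (star (v k) ⬝ᵥ (σ *ᵥ v k)).re
          ≤ ∑ k, ((ρA k₁).rank : ℝ) * (star (v k) ⬝ᵥ (σ *ᵥ v k)).re := by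
            apply Finset.sum_le_sum
            intro k _
            exact mul_le_mul_of_nonneg_right (by exact_mod_cast hrankmax k) (hq0 σ hσ.1 k)
        _ = ((ρA k₁).rank : ℝ) * ∑ k, (star (v k) ⬝ᵥ (σ *ᵥ v k)).re := by
            rw [Finset.mul_sum]
        _ ≤ ((ρA k₁).rank : ℝ) * 1 :=
            mul_le_mul_of_nonneg_left (hqsum σ hσ) (by positivity)
        _ = ((ρA k₁).rank : ℝ) := mul_one _
    rcases le_or_gt t 1 with hc | hc
    · have h5 : Real.logb 2 t ≤ 0 := Real.logb_nonpos one_lt_two ht0 hc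
      have h6 : 0 ≤ Real.logb 2 (((ρA k₁).rank : ℝ)) := by
        simpa using logb_nat_mono (Nat.zero_le (ρA k₁).rank)
      linarith
    · exact Real.logb_le_logb_of_le one_lt_two (by linarith) htR
  have hτ : ∀ k, star (v k) ⬝ᵥ (pureMat (v k₁) *ᵥ v k) = if k = k₁ then 1 else 0 := by
    intro k
    rw [dotProduct_pureMat_mulVec]
    have h1 : star (v k) ⬝ᵥ v k₁ = if k = k₁ then 1 else 0 := by
      rw [← hv k k₁]
      simp only [dotProduct, Pi.star_apply, starRingEnd_apply]
    have h2 : star (v k₁) ⬝ᵥ v k = if k₁ = k then 1 else 0 := by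
      rw [← hv k₁ k]
      simp only [dotProduct, Pi.star_apply, starRingEnd_apply]
    rw [h1, h2]
    by_cases h : k = k₁
    · simp [h]
    · simp [h, Ne.symm h]
  have hσ₀ : IsDensity (pureMat (v k₁)) := by
    refine ⟨pureMat_posSemidef (v k₁), ?_⟩
    have h1 := hv k₁ k₁
    rw [if_pos rfl] at h1
    have h2 : (pureMat (v k₁)).trace = ∑ b, (starRingEnd ℂ) (v k₁ b) * v k₁ b := by
      simp only [Matrix.trace, Matrix.diag, pureMat, Matrix.vecMulVec_apply, Pi.star_apply,
        starRingEnd_apply]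
      apply Finset.sum_congr rfl
      intro b _
      ring
    rw [h2, h1]
  have hval : ((suppProj (∑ k, (ρA k) ⊗ₖ pureMat (v k))
      * ((1 : Matrix A A ℂ) ⊗ₖ pureMat (v k₁))).trace).re = ((ρA k₁).rank : ℝ) := by
    have h7 : ((suppProj (∑ k, (ρA k) ⊗ₖ pureMat (v k))
        * ((1 : Matrix A A ℂ) ⊗ₖ pureMat (v k₁))).trace) = ((ρA k₁).rank : ℂ) := by
      rw [htr (pureMat (v k₁))]
      simp only [hτ, mul_ite, mul_one, mul_zero]
      simp [Finset.sum_ite_eq']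
    rw [h7]
    simp
  unfold H0cond
  rw [hMR]
  apply le_antisymm
  · apply Real.sSup_le
    · rintro x ⟨σ, hσ, rfl⟩
      exact hub σ hσ
    · simpa using logb_nat_mono (Nat.zero_le (ρA k₁).rank)
  · apply le_csSup
    · refine ⟨Real.logb 2 (((ρA k₁).rank : ℝ)), ?_⟩
      rintro x ⟨σ, hσ, rfl⟩
      exact hub σ hσ
    · exact ⟨pureMat (v k₁), hσ₀, by rw [hval]⟩


end
end

section
/- Let ρ and σ be positive semi-definite operators on a finite-dimensional Hilbert space with eigenvalue sequences (arranged in decreasing order) P and Q respectively. Then ‖ρ − σ‖_1 ≥ ‖P − Q‖_1, i.e., the trace distance between the operators is at least the ℓ¹ distance between their ordered eigenvalue vectors. -/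
open Matrix Kronecker BigOperators
open scoped ComplexOrder

noncomputable section
attribute [local instance] Classical.propDecidable

lemma quadForm_spectral {n : Type*} [Fintype n] [DecidableEq n] (A : Matrix n n ℂ)
    (hA : A.IsHermitian) (x : n → ℂ) :
    star x ⬝ᵥ (A *ᵥ x) = ∑ j, (hA.eigenvalues j : ℂ) *
      (star ((star (hA.eigenvectorUnitary : Matrix n n ℂ) *ᵥ x) j) *
        ((star (hA.eigenvectorUnitary : Matrix n n ℂ) *ᵥ x) j)) := by
  set U := (hA.eigenvectorUnitary : Matrix n n ℂ)
  set c := star U *ᵥ x with hc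
  have hstc : star c = star x ᵥ* U := by
    rw [hc, star_mulVec, star_eq_conjTranspose, conjTranspose_conjTranspose]
  conv_lhs => rw [hA.spectral_theorem, Unitary.conjStarAlgAut_apply]
  rw [← mulVec_mulVec, ← mulVec_mulVec, dotProduct_mulVec (star x) U, ← hstc, ← hc]
  simp [dotProduct, mulVec_diagonal, Function.comp]
  exact Finset.sum_congr rfl fun j _ => by ring

lemma norm_spectral {n : Type*} [Fintype n] [DecidableEq n] (A : Matrix n n ℂ)
    (hA : A.IsHermitian) (x : n → ℂ) :
    star ((star (hA.eigenvectorUnitary : Matrix n n ℂ) *ᵥ x)) ⬝ᵥ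
      ((star (hA.eigenvectorUnitary : Matrix n n ℂ) *ᵥ x)) = star x ⬝ᵥ x := by
  set U := (hA.eigenvectorUnitary : Matrix n n ℂ)
  have hstc : star (star U *ᵥ x) = star x ᵥ* U := by
    rw [star_mulVec, star_eq_conjTranspose, conjTranspose_conjTranspose]
  rw [hstc, ← dotProduct_mulVec, mulVec_mulVec]
  have : U * star U = 1 := Unitary.coe_mul_star_self hA.eigenvectorUnitary
  rw [this, one_mulVec]

/-- Weyl monotonicity -/
lemma weyl_mono {n : Type*} [Fintype n] [DecidableEq n] (A B : Matrix n n ℂ)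
    (hA : A.IsHermitian) (hB : B.IsHermitian) (hAB : (B - A).PosSemidef)
    (P Q : Fin (Fintype.card n) → ℝ) (hP : Antitone P) (hQ : Antitone Q)
    (e f : Fin (Fintype.card n) ≃ n)
    (hPe : P = hA.eigenvalues ∘ e) (hQf : Q = hB.eigenvalues ∘ f)
    (i : Fin (Fintype.card n)) : P i ≤ Q i := by
  set U := (hA.eigenvectorUnitary : Matrix n n ℂ)
  set V := (hB.eigenvectorUnitary : Matrix n n ℂ)
  -- the linear constraint map
  let g : (n → ℂ) →ₗ[ℂ] ({j // j ≠ i} → ℂ) :=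
    { toFun := fun x j => if i < j.1 then (star U *ᵥ x) (e j.1) else (star V *ᵥ x) (f j.1)
      map_add' := by intro x y; funext j; by_cases h : i < j.1 <;> simp [h, mulVec_add]
      map_smul' := by intro r x; funext j; by_cases h : i < j.1 <;> simp [h, mulVec_smul] }
  have hcard : Fintype.card {j // j ≠ i} < Fintype.card n := by
    have h1 : Fintype.card {j // j ≠ i} = Fintype.card n - 1 := by
      simp [Fintype.card_subtype_compl, Fintype.card_subtype_eq]
    rw [h1]
    have : 0 < Fintype.card n := Fintype.card_pos_iff.mpr ⟨e i⟩
    omega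
  have hker : ∃ x : n → ℂ, x ≠ 0 ∧ g x = 0 := by
    have hni : ¬ Function.Injective g := by
      intro hinj
      have := LinearMap.finrank_le_finrank_of_injective hinj
      simp only [Module.finrank_pi] at this
      omega
    rw [← LinearMap.ker_eq_bot] at hni
    obtain ⟨x, hx, hx0⟩ := Submodule.exists_mem_ne_zero_of_ne_bot hni
    exact ⟨x, hx0, hx⟩
  obtain ⟨x, hx0, hgx⟩ := hker
  set c := star U *ᵥ x with hcdef
  set b := star V *ᵥ x with hbdef
  have hc0 : ∀ j : Fin (Fintype.card n), i < j → c (e j) = 0 := by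
    intro j hj
    have := congrFun hgx ⟨j, fun h => absurd h (by exact fun hh => lt_irrefl i (hh ▸ hj))⟩
    simpa [g, hj] using this
  have hb0 : ∀ j : Fin (Fintype.card n), j < i → b (f j) = 0 := by
    intro j hj
    have := congrFun hgx ⟨j, ne_of_lt hj⟩
    simpa [g, not_lt_of_gt hj, not_lt.mpr (le_of_lt hj)] using this
  -- norms
  set N : ℝ := (star x ⬝ᵥ x).re with hN
  have hNc : ∑ j, Complex.normSq (c j) = N := by
    have := norm_spectral A hA x
    rw [← hcdef] at this
    rw [hN, ← this]
    simp [dotProduct, Complex.normSq_apply, Complex.mul_re, Complex.star_def]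
  have hNb : ∑ j, Complex.normSq (b j) = N := by
    have := norm_spectral B hB x
    rw [← hbdef] at this
    rw [hN, ← this]
    simp [dotProduct, Complex.normSq_apply, Complex.mul_re, Complex.star_def]
  have hNpos : 0 < N := by
    have hsum : N = ∑ j, Complex.normSq (x j) := by
      simp [hN, dotProduct, Complex.normSq_apply, Complex.mul_re, Complex.star_def]
    rw [hsum]
    rcases Function.ne_iff.mp hx0 with ⟨j, hj⟩
    exact Finset.sum_pos' (fun k _ => Complex.normSq_nonneg _)
      ⟨j, Finset.mem_univ j, Complex.normSq_pos.mpr hj⟩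
  -- quadratic forms
  have hqA : (star x ⬝ᵥ (A *ᵥ x)).re = ∑ j, hA.eigenvalues j * Complex.normSq (c j) := by
    rw [quadForm_spectral A hA x, ← hcdef]
    rw [Complex.re_sum]
    congr 1; funext j
    rw [Complex.star_def, ← Complex.normSq_eq_conj_mul_self, ← Complex.ofReal_mul,
      Complex.ofReal_re]
  have hqB : (star x ⬝ᵥ (B *ᵥ x)).re = ∑ j, hB.eigenvalues j * Complex.normSq (b j) := by
    rw [quadForm_spectral B hB x, ← hbdef]
    rw [Complex.re_sum]
    congr 1; funext j
    rw [Complex.star_def, ← Complex.normSq_eq_conj_mul_self, ← Complex.ofReal_mul,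
      Complex.ofReal_re]
  -- reindex
  have hA' : (star x ⬝ᵥ (A *ᵥ x)).re = ∑ k : Fin (Fintype.card n), P k * Complex.normSq (c (e k)) := by
    rw [hqA, ← Equiv.sum_comp e (fun j => hA.eigenvalues j * Complex.normSq (c j)), hPe]
    rfl
  have hB' : (star x ⬝ᵥ (B *ᵥ x)).re = ∑ k : Fin (Fintype.card n), Q k * Complex.normSq (b (f k)) := by
    rw [hqB, ← Equiv.sum_comp f (fun j => hB.eigenvalues j * Complex.normSq (b j)), hQf]
    rfl
  have hNc' : ∑ k : Fin (Fintype.card n), Complex.normSq (c (e k)) = N := by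
    rw [← hNc, Equiv.sum_comp e (fun j => Complex.normSq (c j))]
  have hNb' : ∑ k : Fin (Fintype.card n), Complex.normSq (b (f k)) = N := by
    rw [← hNb, Equiv.sum_comp f (fun j => Complex.normSq (b j))]
  have hlow : P i * N ≤ (star x ⬝ᵥ (A *ᵥ x)).re := by
    rw [hA', ← hNc', Finset.mul_sum]
    apply Finset.sum_le_sum
    intro k _
    rcases lt_or_ge i k with hk | hk
    · simp [hc0 k hk]
    · exact mul_le_mul_of_nonneg_right (hP hk) (Complex.normSq_nonneg _)
  have hhigh : (star x ⬝ᵥ (B *ᵥ x)).re ≤ Q i * N := by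
    rw [hB', ← hNb', Finset.mul_sum]
    apply Finset.sum_le_sum
    intro k _
    rcases lt_or_ge k i with hk | hk
    · simp [hb0 k hk]
    · exact mul_le_mul_of_nonneg_right (hQ hk) (Complex.normSq_nonneg _)
  have hmid : (star x ⬝ᵥ (A *ᵥ x)).re ≤ (star x ⬝ᵥ (B *ᵥ x)).re := by
    have h0 := hAB.dotProduct_mulVec_nonneg x
    rw [sub_mulVec, dotProduct_sub] at h0
    have := (Complex.le_def.mp h0).1
    simp only [Complex.sub_re, Complex.zero_re] at this
    linarith
  have : P i * N ≤ Q i * N := le_trans hlow (le_trans hmid hhigh)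
  exact le_of_mul_le_mul_right (by linarith) hNpos


lemma trace_conj_unitary {n : Type*} [Fintype n] [DecidableEq n]
    (U : Matrix.unitaryGroup n ℂ) (M : Matrix n n ℂ) :
    ((U : Matrix n n ℂ) * M * star (U : Matrix n n ℂ)).trace = M.trace := by
  rw [Matrix.trace_mul_cycle, Unitary.coe_star_mul_self, Matrix.one_mul]

lemma conj_unitary_mul {n : Type*} [Fintype n] [DecidableEq n]
    (U : Matrix.unitaryGroup n ℂ) (D E : Matrix n n ℂ) :
    ((U : Matrix n n ℂ) * D * star (U : Matrix n n ℂ)) *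
      ((U : Matrix n n ℂ) * E * star (U : Matrix n n ℂ))
      = (U : Matrix n n ℂ) * (D * E) * star (U : Matrix n n ℂ) := by
  have h : star (U : Matrix n n ℂ) * (U : Matrix n n ℂ) = 1 := Unitary.coe_star_mul_self U
  simp only [Matrix.mul_assoc]
  rw [← Matrix.mul_assoc (star (U : Matrix n n ℂ)) (U : Matrix n n ℂ), h, Matrix.one_mul]

lemma conj_unitary_psd {n : Type*} [Fintype n] [DecidableEq n]
    (U : Matrix.unitaryGroup n ℂ) (v : n → ℝ) (hv : ∀ i, 0 ≤ v i) :
    (((U : Matrix n n ℂ) * Matrix.diagonal (fun i => (v i : ℂ)) *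
      star (U : Matrix n n ℂ))).PosSemidef := by
  rw [Matrix.star_eq_conjTranspose]
  exact Matrix.PosSemidef.mul_mul_conjTranspose_same
    (Matrix.posSemidef_diagonal_iff.mpr fun i => by
      exact_mod_cast Complex.zero_le_real.mpr (hv i)) _

lemma herm_trace_eq {n : Type*} [Fintype n] [DecidableEq n] {A : Matrix n n ℂ}
    (hA : A.IsHermitian) : A.trace = ∑ j, (hA.eigenvalues j : ℂ) := by
  conv_lhs => rw [hA.spectral_theorem, Unitary.conjStarAlgAut_apply]
  rw [trace_conj_unitary, Matrix.trace_diagonal]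
  rfl

open scoped MatrixOrder in
lemma msqrt_eq_of_sq {n : Type*} [Fintype n] [DecidableEq n] (M S : Matrix n n ℂ)
    (hM : M.PosSemidef) (hS : S.PosSemidef) (h : S * S = M) :
    (hM.1.eigenvectorUnitary : Matrix n n ℂ) *
      Matrix.diagonal (fun i => ((Real.sqrt (hM.1.eigenvalues i) : ℝ) : ℂ)) *
      star (hM.1.eigenvectorUnitary : Matrix n n ℂ) = S := by
  have h1 : cfc Real.sqrt M = S := by
    rw [← cfcₙ_eq_cfc, ← CFC.sqrt_eq_real_sqrt M hM.nonneg]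
    exact CFC.sqrt_unique h hS.nonneg
  rw [← h1, hM.1.cfc_eq, Matrix.IsHermitian.cfc, Unitary.conjStarAlgAut_apply]
  rfl

/-- The trace distance between two positive semidefinite operators is at least
the ℓ¹ distance between their decreasingly ordered eigenvalue vectors. -/
theorem eigenvalue_l1_le_traceNorm {n : Type*} [Fintype n] [DecidableEq n]
    (ρ σ : Matrix n n ℂ) (hρ : ρ.PosSemidef) (hσ : σ.PosSemidef)
    (P Q : Fin (Fintype.card n) → ℝ) (hP : Antitone P) (hQ : Antitone Q)
    (e f : Fin (Fintype.card n) ≃ n)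
    (hPe : P = hρ.1.eigenvalues ∘ e) (hQf : Q = hσ.1.eigenvalues ∘ f) :
    ∑ i, |P i - Q i| ≤ traceNorm (ρ - σ) := by
  classical
  have hΔ : (ρ - σ).IsHermitian := hρ.1.sub hσ.1
  set W := hΔ.eigenvectorUnitary with hWdef
  set lam := hΔ.eigenvalues with hlamdef
  set Δp : Matrix n n ℂ := (W : Matrix n n ℂ) *
    Matrix.diagonal (fun j => ((max (lam j) 0 : ℝ) : ℂ)) * star (W : Matrix n n ℂ) with hΔp
  set Δm : Matrix n n ℂ := (W : Matrix n n ℂ) *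
    Matrix.diagonal (fun j => ((max (-lam j) 0 : ℝ) : ℂ)) * star (W : Matrix n n ℂ) with hΔm
  have hpsd_p : Δp.PosSemidef := conj_unitary_psd W _ (fun i => le_max_right _ _)
  have hpsd_m : Δm.PosSemidef := conj_unitary_psd W _ (fun i => le_max_right _ _)
  have hsub : ρ - σ = Δp - Δm := by
    conv_lhs => rw [hΔ.spectral_theorem, Unitary.conjStarAlgAut_apply]
    rw [hΔp, hΔm, ← Matrix.sub_mul, ← Matrix.mul_sub, Matrix.diagonal_sub]
    congr 2
    funext j
    have hmx : max (lam j) 0 - max (-lam j) 0 = lam j := by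
      rcases le_total 0 (lam j) with h | h
      · rw [max_eq_left h, max_eq_right (neg_nonpos.mpr h), sub_zero]
      · rw [max_eq_right h, max_eq_left (neg_nonneg.mpr h)]; ring
    funext k
    simp only [Matrix.diagonal_apply, Function.comp_apply]
    split_ifs with hjk
    · rw [← Complex.ofReal_sub, hmx]; rfl
    · rfl
  set R : Matrix n n ℂ := σ + Δp with hRdef
  have hR : R.IsHermitian := hσ.1.add hpsd_p.1
  have hRσ : R - σ = Δp := by rw [hRdef]; abel
  have hRρ : R - ρ = Δm := by
    have : R - ρ = Δp - (ρ - σ) := by rw [hRdef]; abel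
    rw [this, hsub]; abel
  -- decreasing eigenvalues of R
  set g0 : Fin (Fintype.card n) ≃ n := (Fintype.equivFin n).symm with hg0
  set μ : Fin (Fintype.card n) → ℝ := hR.eigenvalues ∘ g0 with hμ
  set τ : Equiv.Perm (Fin (Fintype.card n)) := Tuple.sort μ with hτ
  set Rv : Fin (Fintype.card n) → ℝ := fun k => μ (τ k.rev) with hRv
  have hRvAnti : Antitone Rv := by
    intro a b hab
    exact Tuple.monotone_sort μ (Fin.rev_le_rev.mpr hab)
  set g : Fin (Fintype.card n) ≃ n := (Fin.revPerm.trans τ).trans g0 with hg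
  have hRg : Rv = hR.eigenvalues ∘ g := by
    funext k
    simp [hRv, hg, hμ, Function.comp]
  have hPR : ∀ k, P k ≤ Rv k :=
    weyl_mono ρ R hρ.1 hR (by rw [hRρ]; exact hpsd_m) P Rv hP hRvAnti e g hPe hRg
  have hQR : ∀ k, Q k ≤ Rv k :=
    weyl_mono σ R hσ.1 hR (by rw [hRσ]; exact hpsd_p) Q Rv hQ hRvAnti f g hQf hRg
  -- trace identities
  have hre : ∀ (M : Matrix n n ℂ) (hM : M.IsHermitian),
      M.trace.re = ∑ j, hM.eigenvalues j := by
    intro M hM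
    rw [herm_trace_eq hM, Complex.re_sum]
    simp
  have hsumP : ∑ k, P k = ρ.trace.re := by
    rw [hre ρ hρ.1, hPe, ← Equiv.sum_comp e hρ.1.eigenvalues]
    rfl
  have hsumQ : ∑ k, Q k = σ.trace.re := by
    rw [hre σ hσ.1, hQf, ← Equiv.sum_comp f hσ.1.eigenvalues]
    rfl
  have hsumR : ∑ k, Rv k = R.trace.re := by
    rw [hre R hR, hRg, ← Equiv.sum_comp g hR.eigenvalues]
    rfl
  have hTp : Δp.trace.re = ∑ j, max (lam j) 0 := by
    rw [hΔp, trace_conj_unitary, Matrix.trace_diagonal, Complex.re_sum]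
    simp
  have hTm : Δm.trace.re = ∑ j, max (-lam j) 0 := by
    rw [hΔm, trace_conj_unitary, Matrix.trace_diagonal, Complex.re_sum]
    simp
  have e1 : R.trace.re = σ.trace.re + Δp.trace.re := by
    rw [hRdef, Matrix.trace_add, Complex.add_re]
  have e2 : R.trace.re = ρ.trace.re + Δm.trace.re := by
    have hReq : R = ρ + Δm := by rw [← hRρ]; abel
    rw [hReq, Matrix.trace_add, Complex.add_re]
  -- trace norm computation
  have hpsdΔ2 : ((ρ - σ)ᴴ * (ρ - σ)).PosSemidef := Matrix.posSemidef_conjTranspose_mul_self _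
  set S : Matrix n n ℂ := (W : Matrix n n ℂ) *
    Matrix.diagonal (fun j => ((|lam j| : ℝ) : ℂ)) * star (W : Matrix n n ℂ) with hS
  have hSpsd : S.PosSemidef := conj_unitary_psd W _ (fun i => abs_nonneg _)
  have hSsq : S ^ 2 = (ρ - σ)ᴴ * (ρ - σ) := by
    rw [hΔ.eq]
    conv_rhs => rw [hΔ.spectral_theorem, Unitary.conjStarAlgAut_apply]
    rw [pow_two, hS, conj_unitary_mul, conj_unitary_mul, Matrix.diagonal_mul_diagonal,
      Matrix.diagonal_mul_diagonal]
    have habs : ∀ a : ℝ, ((|a| : ℝ) : ℂ) * ((|a| : ℝ) : ℂ) = ((a : ℝ) : ℂ) * ((a : ℝ) : ℂ) := by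
      intro a
      rw [← Complex.ofReal_mul, ← Complex.ofReal_mul, abs_mul_abs_self]
    congr 2
    funext j k
    simp only [Matrix.diagonal_apply, Function.comp_apply]
    split_ifs with hjk
    · rw [habs (lam j)]; rfl
    · rfl
  have hmsqrt : msqrt ((ρ - σ)ᴴ * (ρ - σ)) = S := by
    rw [msqrt, dif_pos hpsdΔ2]
    exact msqrt_eq_of_sq _ S hpsdΔ2 hSpsd (by rw [← pow_two]; exact hSsq)
  have hTN : traceNorm (ρ - σ) = ∑ j, |lam j| := by
    rw [traceNorm, hmsqrt, hS, trace_conj_unitary, Matrix.trace_diagonal, Complex.re_sum]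
    simp
  -- final chain
  calc ∑ i, |P i - Q i|
      ≤ ∑ i, ((Rv i - P i) + (Rv i - Q i)) := by
        apply Finset.sum_le_sum
        intro i _
        have h1 := hPR i
        have h2 := hQR i
        exact abs_sub_le_iff.mpr ⟨by linarith, by linarith⟩
    _ = (∑ i, Rv i) + (∑ i, Rv i) - (∑ i, P i) - (∑ i, Q i) := by
        rw [Finset.sum_add_distrib, Finset.sum_sub_distrib, Finset.sum_sub_distrib]
        ring
    _ = Δp.trace.re + Δm.trace.re := by
        rw [hsumP, hsumQ, hsumR]
        linarith
    _ = ∑ j, (max (lam j) 0 + max (-lam j) 0) := by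
        rw [hTp, hTm, ← Finset.sum_add_distrib]
    _ = ∑ j, |lam j| := by
        apply Finset.sum_congr rfl
        intro j _
        rcases le_total 0 (lam j) with h | h
        · rw [abs_of_nonneg h, max_eq_left h, max_eq_right (neg_nonpos.mpr h), add_zero]
        · rw [abs_of_nonpos h, max_eq_right h, max_eq_left (neg_nonneg.mpr h), zero_add]
    _ = traceNorm (ρ - σ) := hTN.symm

end
end

section
/- Let ρ, σ be subnormalized positive semi-definite operators (trace ≤ 1) on a finite-dimensional Hilbert space. Define the generalized fidelity F̄(ρ,σ) = F(ρ,σ) + √((1 − tr ρ)(1 − tr σ)) where F is the fidelity, and the purified distance P(ρ,σ) = √(1 − F̄(ρ,σ)²). Then (1/2)‖ρ − σ‖_1 ≤ P(ρ,σ) ≤ √(‖ρ − σ‖_1 + |tr ρ − tr σ|). -/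
open Matrix Kronecker BigOperators
open scoped ComplexOrder

noncomputable section
attribute [local instance] Classical.propDecidable

/-- The fidelity `F(ρ,σ) = ‖√ρ √σ‖₁`. -/
def fidelity {n : Type*} [Fintype n] [DecidableEq n] (ρ σ : Matrix n n ℂ) : ℝ :=
  traceNorm (msqrt ρ * msqrt σ)

/-- The generalized fidelity for subnormalized states. -/
def genFidelity {n : Type*} [Fintype n] [DecidableEq n] (ρ σ : Matrix n n ℂ) : ℝ :=
  fidelity ρ σ + Real.sqrt ((1 - ρ.trace.re) * (1 - σ.trace.re))

/-- The purified distance `P(ρ,σ) = √(1 - F̄(ρ,σ)²)`. -/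
def purifiedDist {n : Type*} [Fintype n] [DecidableEq n] (ρ σ : Matrix n n ℂ) : ℝ :=
  Real.sqrt (1 - genFidelity ρ σ ^ 2)


section AuxLemmas
set_option linter.unusedSectionVars false
open Finset

variable {n : Type*} [Fintype n] [DecidableEq n]

def Matrix.PosSemidef.sqrt {ρ : Matrix n n ℂ} (h : ρ.PosSemidef) : Matrix n n ℂ :=
  (h.1.eigenvectorUnitary : Matrix n n ℂ) *
    Matrix.diagonal (fun i => ((Real.sqrt (h.1.eigenvalues i) : ℝ) : ℂ)) *
    star (h.1.eigenvectorUnitary : Matrix n n ℂ)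

lemma herm_spec {A : Matrix n n ℂ} (h : A.IsHermitian) :
    A = (h.eigenvectorUnitary : Matrix n n ℂ) * diagonal (RCLike.ofReal ∘ h.eigenvalues) *
      star (h.eigenvectorUnitary : Matrix n n ℂ) := by
  conv_lhs => rw [h.spectral_theorem, Unitary.conjStarAlgAut_apply]

lemma herm_diag {A : Matrix n n ℂ} (h : A.IsHermitian) :
    star (h.eigenvectorUnitary : Matrix n n ℂ) * A * (h.eigenvectorUnitary : Matrix n n ℂ) =
      diagonal (RCLike.ofReal ∘ h.eigenvalues) := by
  have := h.conjStarAlgAut_star_eigenvectorUnitary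
  rw [Unitary.conjStarAlgAut_apply, Unitary.coe_star, star_star] at this
  exact this

lemma Matrix.PosSemidef.posSemidef_sqrt {ρ : Matrix n n ℂ} (h : ρ.PosSemidef) :
    h.sqrt.PosSemidef := by
  have hd : (Matrix.diagonal (fun i => ((Real.sqrt (h.1.eigenvalues i) : ℝ) : ℂ))).PosSemidef :=
    posSemidef_diagonal_iff.mpr fun i => Complex.zero_le_real.mpr (Real.sqrt_nonneg _)
  exact hd.mul_mul_conjTranspose_same _

lemma Matrix.PosSemidef.sqrt_mul_self {ρ : Matrix n n ℂ} (h : ρ.PosSemidef) :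
    h.sqrt * h.sqrt = ρ := by
  have hV : star (h.1.eigenvectorUnitary : Matrix n n ℂ) * (h.1.eigenvectorUnitary : Matrix n n ℂ)
      = 1 := Unitary.coe_star_mul_self _
  have key : ∀ V D : Matrix n n ℂ, star V * V = 1 →
      V * D * star V * (V * D * star V) = V * (D * D) * star V := by
    intro V D hV
    rw [show V * D * star V * (V * D * star V) = V * D * (star V * V) * D * star V by
      simp only [Matrix.mul_assoc], hV]
    simp only [Matrix.mul_one, Matrix.mul_assoc]
  unfold Matrix.PosSemidef.sqrt
  rw [key _ _ hV, diagonal_mul_diagonal]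
  conv_rhs => rw [herm_spec h.1]
  congr 3
  funext i
  simp only [Function.comp_apply]
  rw [← Complex.ofReal_mul, Real.mul_self_sqrt (h.eigenvalues_nonneg i)]
  rfl

lemma msqrt_eq {ρ : Matrix n n ℂ} (h : ρ.PosSemidef) : msqrt ρ = h.sqrt := dif_pos h

lemma msqrt_posSemidef {ρ : Matrix n n ℂ} (h : ρ.PosSemidef) : (msqrt ρ).PosSemidef := by
  rw [msqrt_eq h]; exact h.posSemidef_sqrt

lemma msqrt_mul_self {ρ : Matrix n n ℂ} (h : ρ.PosSemidef) : msqrt ρ * msqrt ρ = ρ := by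
  rw [msqrt_eq h]; exact h.sqrt_mul_self

lemma trace_hermitian {A : Matrix n n ℂ} (h : A.IsHermitian) :
    A.trace = ∑ i, (h.eigenvalues i : ℂ) := by
  conv_lhs => rw [herm_spec h]
  rw [trace_mul_comm, ← mul_assoc, Unitary.coe_star_mul_self, one_mul, trace_diagonal]
  simp

lemma psd_sqrt_trace {A : Matrix n n ℂ} (h : A.PosSemidef) :
    h.sqrt.trace = ∑ i, (Real.sqrt (h.1.eigenvalues i) : ℂ) := by
  rw [Matrix.PosSemidef.sqrt, trace_mul_comm, ← mul_assoc]
  rw [show (star (h.1.eigenvectorUnitary : Matrix n n ℂ)) * (h.1.eigenvectorUnitary : Matrix n n ℂ) = 1 from Unitary.coe_star_mul_self _, one_mul, trace_diagonal]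

lemma traceNorm_eq_sum (M : Matrix n n ℂ) :
    traceNorm M = ∑ i, Real.sqrt ((posSemidef_conjTranspose_mul_self M).1.eigenvalues i) := by
  rw [traceNorm, msqrt_eq (posSemidef_conjTranspose_mul_self M),
    psd_sqrt_trace (posSemidef_conjTranspose_mul_self M)]
  simp

lemma traceNorm_nonneg (M : Matrix n n ℂ) : 0 ≤ traceNorm M := by
  rw [traceNorm_eq_sum]
  exact Finset.sum_nonneg fun i _ => Real.sqrt_nonneg _

lemma star_mul_self_unitary {V : Matrix n n ℂ} (hV : V ∈ Matrix.unitaryGroup n ℂ) :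
    Vᴴ * V = 1 := by
  rw [← Matrix.star_eq_conjTranspose]; exact (mem_unitaryGroup_iff'.mp hV)

lemma self_mul_star_unitary {V : Matrix n n ℂ} (hV : V ∈ Matrix.unitaryGroup n ℂ) :
    V * Vᴴ = 1 := by
  rw [← Matrix.star_eq_conjTranspose]; exact (mem_unitaryGroup_iff.mp hV)

lemma gram_diag (M : Matrix n n ℂ) :
    (M * ((posSemidef_conjTranspose_mul_self M).1.eigenvectorUnitary : Matrix n n ℂ))ᴴ *
      (M * ((posSemidef_conjTranspose_mul_self M).1.eigenvectorUnitary : Matrix n n ℂ)) =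
      diagonal (Complex.ofReal ∘ (posSemidef_conjTranspose_mul_self M).1.eigenvalues) := by
  set hH := (posSemidef_conjTranspose_mul_self M).1
  set V : Matrix n n ℂ := (hH.eigenvectorUnitary : Matrix n n ℂ) with hVdef
  have hV : V ∈ Matrix.unitaryGroup n ℂ := hH.eigenvectorUnitary.2
  rw [conjTranspose_mul, ← Matrix.mul_assoc, Matrix.mul_assoc Vᴴ Mᴴ M]
  conv_lhs => rw [Matrix.mul_assoc Vᴴ (Mᴴ*M) V, herm_spec hH]
  rw [← Matrix.star_eq_conjTranspose V, ← hVdef]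
  rw [show V * diagonal (RCLike.ofReal ∘ hH.eigenvalues) * star V * V
      = V * diagonal (RCLike.ofReal ∘ hH.eigenvalues) by
    rw [Matrix.mul_assoc, mem_unitaryGroup_iff'.mp hV, Matrix.mul_one]]
  rw [← Matrix.mul_assoc, mem_unitaryGroup_iff'.mp hV, Matrix.one_mul]
  rfl

lemma column_norm_sq (K : Matrix n n ℂ) (d : n → ℝ) (hG : Kᴴ * K = diagonal (Complex.ofReal ∘ d))
    (i : n) : ∑ j, ‖K j i‖ ^ 2 = d i := by
  have h := congrArg (fun A => A i i) hG
  simp only [Matrix.mul_apply, conjTranspose_apply, diagonal_apply_eq, Function.comp] at h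
  have : ∑ j, star (K j i) * K j i = ∑ j, (‖K j i‖ ^ 2 : ℂ) := by
    refine Finset.sum_congr rfl fun j _ => ?_
    rw [Complex.star_def, mul_comm, Complex.mul_conj']
  rw [this] at h
  have h2 : ((∑ j, ‖K j i‖ ^ 2 : ℝ) : ℂ) = ((d i : ℝ) : ℂ) := by push_cast; exact h
  exact_mod_cast h2

lemma column_inner (K : Matrix n n ℂ) (d : n → ℝ) (hG : Kᴴ * K = diagonal (Complex.ofReal ∘ d))
    (i j : n) : ∑ k, (starRingEnd ℂ) (K k i) * K k j = if i = j then (d i : ℂ) else 0 := by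
  have h := congrArg (fun A => A i j) hG
  simp only [Matrix.mul_apply, conjTranspose_apply, diagonal_apply, Function.comp] at h
  split
  · next hij => subst hij; simpa using h
  · next hij => simpa [hij] using h

lemma unitary_completion (K : Matrix n n ℂ) (d : n → ℝ) (hd : ∀ i, 0 ≤ d i)
    (hcol : ∀ i, ∑ j, ‖K j i‖ ^ 2 = d i)
    (hinner : ∀ i j, ∑ k, (starRingEnd ℂ) (K k i) * K k j = if i = j then (d i : ℂ) else 0) :
    ∃ B : Matrix n n ℂ, B ∈ Matrix.unitaryGroup n ℂ ∧
      B * diagonal (Complex.ofReal ∘ Real.sqrt ∘ d) = K := by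
  classical
  set v : n → EuclideanSpace ℂ n := fun i => (Real.sqrt (d i) : ℂ)⁻¹ • WithLp.toLp 2 (fun j => K j i) with hv
  have hortho : Orthonormal ℂ (Set.restrict {i | d i ≠ 0} v) := by
    rw [orthonormal_iff_ite]
    rintro ⟨i, hi⟩ ⟨j, hj⟩
    change inner ℂ (v i) (v j) = _
    simp only [hv]
    rw [inner_smul_left, inner_smul_right, PiLp.inner_apply]
    simp only [RCLike.inner_apply, PiLp.toLp_apply, mul_comm (K _ j)]
    rw [hinner i j]
    simp only [map_inv₀, Complex.conj_ofReal]
    by_cases hij : i = j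
    · subst hij
      rw [if_pos rfl, if_pos rfl]
      have hi' : d i ≠ 0 := hi
      have h1 : Real.sqrt (d i) ≠ 0 :=
        Real.sqrt_ne_zero'.mpr (lt_of_le_of_ne (hd i) (Ne.symm hi'))
      have h2 : Real.sqrt (d i) * Real.sqrt (d i) = d i := Real.mul_self_sqrt (hd i)
      have : ((Real.sqrt (d i))⁻¹ * ((Real.sqrt (d i))⁻¹ * d i) : ℝ) = 1 := by
        field_simp
        rw [Real.sq_sqrt (hd i)]
      have h3 := congrArg (Complex.ofReal) this
      push_cast at h3 ⊢
      linear_combination h3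
    · have hne : (⟨i, hi⟩ : {i | d i ≠ 0}) ≠ ⟨j, hj⟩ := by simpa using hij
      rw [if_neg hij, if_neg hne]
      simp
  obtain ⟨b, hb⟩ := Orthonormal.exists_orthonormalBasis_extension_of_card_eq
    (by simp [finrank_euclideanSpace]) hortho
  refine ⟨Matrix.of fun j i => b i j, ?_, ?_⟩
  · rw [mem_unitaryGroup_iff']
    ext i j
    have := orthonormal_iff_ite.mp b.orthonormal i j
    rw [PiLp.inner_apply] at this
    simp only [Matrix.mul_apply, Matrix.star_apply, Matrix.of_apply, Matrix.one_apply]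
    simpa [RCLike.inner_apply, mul_comm] using this
  · ext j i
    simp only [Matrix.mul_apply, Matrix.of_apply, diagonal_apply]
    rw [Finset.sum_eq_single i]
    · simp only [if_pos rfl]
      by_cases hi : d i = 0
      · have : K j i = 0 := by
          have := hcol i
          rw [hi] at this
          have hz : ∀ k ∈ Finset.univ, (0:ℝ) ≤ ‖K k i‖ ^ 2 := fun k _ => by positivity
          have := (Finset.sum_eq_zero_iff_of_nonneg hz).mp this j (Finset.mem_univ j)
          simpa using this
        simp [hi, this]
      · have hbv := hb i (by simpa using hi)
        rw [hbv, hv]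
        simp only [PiLp.smul_apply, PiLp.toLp_apply, smul_eq_mul]
        have h1 : Real.sqrt (d i) ≠ 0 :=
          Real.sqrt_ne_zero'.mpr (lt_of_le_of_ne (hd i) (Ne.symm hi))
        have h1' : (Real.sqrt (d i) : ℂ) ≠ 0 := by exact_mod_cast h1
        field_simp
        simp [mul_comm]
    · intro k _ hk
      simp [hk]
    · simp

lemma polar (M : Matrix n n ℂ) :
    ∃ U : Matrix n n ℂ, U ∈ Matrix.unitaryGroup n ℂ ∧ M = U * msqrt (Mᴴ * M) := by
  classical
  set hP := posSemidef_conjTranspose_mul_self M with hPdef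
  set hH := hP.1
  set V : Matrix n n ℂ := (hH.eigenvectorUnitary : Matrix n n ℂ) with hVdef
  have hV : V ∈ Matrix.unitaryGroup n ℂ := hH.eigenvectorUnitary.2
  set K : Matrix n n ℂ := M * V with hKdef
  set d := hH.eigenvalues with hddef
  have hG : Kᴴ * K = diagonal (Complex.ofReal ∘ d) := gram_diag M
  have hd : ∀ i, 0 ≤ d i := hP.eigenvalues_nonneg
  obtain ⟨B, hB, hBK⟩ := unitary_completion K d hd
    (fun i => column_norm_sq K d hG i) (fun i j => by
      have h := congrArg (fun A => A i j) hG
      simp only [Matrix.mul_apply, conjTranspose_apply, diagonal_apply, Function.comp] at h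
      simpa [Complex.star_def] using h)
  refine ⟨B * Vᴴ, ?_, ?_⟩
  · rw [← Matrix.star_eq_conjTranspose]
    exact mul_mem hB (Unitary.star_mem hV)
  · have hsq : msqrt (Mᴴ * M) = V * diagonal (Complex.ofReal ∘ Real.sqrt ∘ d) * Vᴴ := by
      rw [msqrt_eq hP]; rfl
    rw [hsq, show B * Vᴴ * (V * diagonal (Complex.ofReal ∘ Real.sqrt ∘ d) * Vᴴ)
        = B * (Vᴴ * V) * diagonal (Complex.ofReal ∘ Real.sqrt ∘ d) * Vᴴ by
      simp only [Matrix.mul_assoc],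
      star_mul_self_unitary hV, Matrix.mul_one, hBK]
    rw [hKdef, Matrix.mul_assoc, self_mul_star_unitary hV, Matrix.mul_one]

lemma unitary_entry_le_one {Z : Matrix n n ℂ} (hZ : Z ∈ Matrix.unitaryGroup n ℂ) (i : n) :
    ‖Z i i‖ ≤ 1 := by
  have hG : Zᴴ * Z = diagonal (Complex.ofReal ∘ fun _ => (1:ℝ)) := by
    rw [star_mul_self_unitary hZ]
    ext a b
    by_cases hab : a = b <;> simp [diagonal_apply, hab, Matrix.one_apply]
  have hsum := column_norm_sq Z (fun _ => 1) hG i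
  have h1 : ‖Z i i‖ ^ 2 ≤ 1 := by
    rw [← hsum]
    exact Finset.single_le_sum (f := fun j => ‖Z j i‖ ^ 2) (fun j _ => by positivity)
      (Finset.mem_univ i)
  nlinarith [norm_nonneg (Z i i)]

lemma re_trace_unitary_mul_le (N M : Matrix n n ℂ) (hN : N ∈ Matrix.unitaryGroup n ℂ) :
    ((N * M).trace).re ≤ traceNorm M := by
  classical
  obtain ⟨U, hU, hM⟩ := polar M
  set hP := posSemidef_conjTranspose_mul_self M
  set hH := hP.1
  set V : Matrix n n ℂ := (hH.eigenvectorUnitary : Matrix n n ℂ) with hVdef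
  have hV : V ∈ Matrix.unitaryGroup n ℂ := hH.eigenvectorUnitary.2
  set d := hH.eigenvalues with hddef
  have hsq : msqrt (Mᴴ * M) = V * diagonal (Complex.ofReal ∘ Real.sqrt ∘ d) * Vᴴ := by
    rw [msqrt_eq hP]; rfl
  set Z : Matrix n n ℂ := Vᴴ * (N * U) * V with hZdef
  have hZ : Z ∈ Matrix.unitaryGroup n ℂ := by
    rw [hZdef, ← Matrix.star_eq_conjTranspose]
    exact mul_mem (mul_mem (Unitary.star_mem hV) (mul_mem hN hU)) hV
  have htr : (N * M).trace = ∑ i, Z i i * (Real.sqrt (d i) : ℂ) := by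
    conv_lhs => rw [hM, hsq]
    rw [show N * (U * (V * diagonal (Complex.ofReal ∘ Real.sqrt ∘ d) * Vᴴ))
        = (N * U * V) * diagonal (Complex.ofReal ∘ Real.sqrt ∘ d) * Vᴴ by
      simp only [Matrix.mul_assoc]]
    rw [Matrix.trace_mul_cycle]
    rw [show Vᴴ * (N * U * V) = Z by rw [hZdef]; simp only [Matrix.mul_assoc]]
    rw [Matrix.trace]
    congr 1
    ext i
    simp [Matrix.mul_diagonal, Matrix.diag]
  have hre : ((N * M).trace).re = ∑ i, (Z i i * (Real.sqrt (d i) : ℂ)).re := by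
    rw [htr, Complex.re_sum]
  rw [hre, traceNorm_eq_sum]
  apply Finset.sum_le_sum
  intro i _
  have h1 : (Z i i * (Real.sqrt (d i) : ℂ)).re ≤ ‖Z i i * (Real.sqrt (d i) : ℂ)‖ :=
    Complex.re_le_norm _
  refine h1.trans ?_
  rw [norm_mul, Complex.norm_real, Real.norm_eq_abs, abs_of_nonneg (Real.sqrt_nonneg _)]
  calc ‖Z i i‖ * Real.sqrt (d i) ≤ 1 * Real.sqrt (d i) := by
        exact mul_le_mul_of_nonneg_right (unitary_entry_le_one hZ i) (Real.sqrt_nonneg _)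
    _ = _ := by rw [one_mul]

lemma trace_conj_mul (A B : Matrix n n ℂ) :
    (Aᴴ * B).trace = ∑ p : n × n, (starRingEnd ℂ) (A p.1 p.2) * B p.1 p.2 := by
  rw [Matrix.trace, ← Finset.univ_product_univ, Finset.sum_product]
  simp only [Matrix.diag, Matrix.mul_apply, conjTranspose_apply, Complex.star_def]
  exact Finset.sum_comm

lemma trace_conj_mul_self_re (A : Matrix n n ℂ) :
    ((Aᴴ * A).trace).re = ∑ p : n × n, ‖A p.1 p.2‖ ^ 2 := by
  rw [trace_conj_mul, Complex.re_sum]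
  refine Finset.sum_congr rfl fun p _ => ?_
  rw [mul_comm, Complex.mul_conj']
  norm_cast

lemma trace_conj_mul_self_re_nonneg (A : Matrix n n ℂ) : 0 ≤ ((Aᴴ * A).trace).re := by
  rw [trace_conj_mul_self_re]
  positivity

lemma re_trace_CS (A B : Matrix n n ℂ) :
    ((Aᴴ * B).trace).re ≤
      Real.sqrt ((Aᴴ * A).trace).re * Real.sqrt ((Bᴴ * B).trace).re := by
  rw [trace_conj_mul, Complex.re_sum, trace_conj_mul_self_re, trace_conj_mul_self_re]
  have h1 : ∀ p : n × n, ((starRingEnd ℂ) (A p.1 p.2) * B p.1 p.2).re ≤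
      ‖A p.1 p.2‖ * ‖B p.1 p.2‖ := by
    intro p
    refine (Complex.re_le_norm _).trans ?_
    rw [norm_mul, RCLike.norm_conj]
  refine (Finset.sum_le_sum fun p _ => h1 p).trans ?_
  have h2 := Finset.sum_mul_sq_le_sq_mul_sq Finset.univ (fun p : n × n => ‖A p.1 p.2‖)
    (fun p : n × n => ‖B p.1 p.2‖)
  have h3 : (0:ℝ) ≤ ∑ p : n × n, ‖A p.1 p.2‖ * ‖B p.1 p.2‖ :=
    Finset.sum_nonneg fun p _ => by positivity
  have hA0 : (0:ℝ) ≤ ∑ p : n × n, ‖A p.1 p.2‖ ^ 2 :=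
    Finset.sum_nonneg fun p _ => sq_nonneg _
  have hB0 : (0:ℝ) ≤ ∑ p : n × n, ‖B p.1 p.2‖ ^ 2 :=
    Finset.sum_nonneg fun p _ => sq_nonneg _
  calc (∑ p : n × n, ‖A p.1 p.2‖ * ‖B p.1 p.2‖)
      = Real.sqrt ((∑ p : n × n, ‖A p.1 p.2‖ * ‖B p.1 p.2‖) ^ 2) := (Real.sqrt_sq h3).symm
    _ ≤ Real.sqrt ((∑ p : n × n, ‖A p.1 p.2‖ ^ 2) * ∑ p : n × n, ‖B p.1 p.2‖ ^ 2) :=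
        Real.sqrt_le_sqrt h2
    _ = _ := Real.sqrt_mul hA0 _

lemma sandwich_entry (G V : Matrix n n ℂ) (i : n) :
    (Vᴴ * G * V) i i = dotProduct (star (fun j => V j i)) (G.mulVec (fun j => V j i)) := by
  simp only [Matrix.mul_apply, conjTranspose_apply, dotProduct, Matrix.mulVec,
    Pi.star_apply, Finset.sum_mul, Finset.mul_sum]
  rw [Finset.sum_comm]
  refine Finset.sum_congr rfl fun j _ => Finset.sum_congr rfl fun k _ => by ring

lemma psd_sandwich_diag_re {G : Matrix n n ℂ} (hG : G.PosSemidef) (V : Matrix n n ℂ) (i : n) :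
    0 ≤ ((Vᴴ * G * V) i i).re := by
  rw [sandwich_entry]
  exact (RCLike.nonneg_iff.mp (hG.dotProduct_mulVec_nonneg fun j => V j i)).1

lemma herm_sandwich_diag (G : Matrix n n ℂ) {A : Matrix n n ℂ} (hA : A.IsHermitian)
    (hGA : G = A) (i : n) :
    ((star (hA.eigenvectorUnitary : Matrix n n ℂ)) * G * (hA.eigenvectorUnitary : Matrix n n ℂ)) i i
      = (hA.eigenvalues i : ℂ) := by
  subst hGA
  rw [herm_diag hA]
  simp

lemma trace_mul_diagonal (M : Matrix n n ℂ) (f : n → ℂ) :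
    (M * diagonal f).trace = ∑ i, M i i * f i := by
  rw [Matrix.trace]
  refine Finset.sum_congr rfl fun i _ => ?_
  simp [Matrix.diag, Matrix.mul_diagonal]

lemma trace_sandwich_diag_mul (V' G : Matrix n n ℂ) (f : n → ℂ) :
    (V' * diagonal f * V'ᴴ * G).trace = ∑ i, (V'ᴴ * G * V') i i * f i := by
  rw [show V' * diagonal f * V'ᴴ * G = (V' * diagonal f) * (V'ᴴ * G) by
      simp only [Matrix.mul_assoc],
    Matrix.trace_mul_comm, show V'ᴴ * G * (V' * diagonal f) = (V'ᴴ * G * V') * diagonal f by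
      simp only [Matrix.mul_assoc],
    trace_mul_diagonal]

lemma powers_stormer {S T : Matrix n n ℂ} (hS : S.PosSemidef) (hT : T.PosSemidef) :
    ((S - T) * (S - T)).trace.re ≤ traceNorm (S * S - T * T) := by
  classical
  set D := S - T with hDdef
  have hD : D.IsHermitian := hS.1.sub hT.1
  set V' : Matrix n n ℂ := (hD.eigenvectorUnitary : Matrix n n ℂ) with hV'def
  have hVu : V' ∈ Matrix.unitaryGroup n ℂ := hD.eigenvectorUnitary.2
  set lam := hD.eigenvalues with hlamdef
  set sgn : n → ℂ := fun i => if lam i < 0 then -1 else 1 with hsgndef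
  set W : Matrix n n ℂ := V' * diagonal sgn * V'ᴴ with hWdef
  set B' : Matrix n n ℂ := S + T with hB'def
  have hsgnu : diagonal sgn ∈ Matrix.unitaryGroup n ℂ := by
    rw [mem_unitaryGroup_iff]
    rw [Matrix.star_eq_conjTranspose, diagonal_conjTranspose, diagonal_mul_diagonal]
    ext i j
    by_cases hij : i = j
    · subst hij
      simp only [diagonal_apply_eq, Matrix.one_apply_eq, hsgndef, Pi.star_apply]
      by_cases h : lam i < 0 <;> simp [h]
    · simp [diagonal_apply, hij, Matrix.one_apply, hij]
  have hWu : W ∈ Matrix.unitaryGroup n ℂ := by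
    rw [hWdef, ← Matrix.star_eq_conjTranspose]
    exact mul_mem (mul_mem hVu hsgnu) (Unitary.star_mem hVu)
  have hspec : D = V' * diagonal (Complex.ofReal ∘ lam) * V'ᴴ := by
    rw [← Matrix.star_eq_conjTranspose]
    exact herm_spec hD
  have habs : ∀ i, sgn i * (lam i : ℂ) = ((|lam i| : ℝ) : ℂ) := by
    intro i
    by_cases h : lam i < 0
    · simp [hsgndef, h, abs_of_neg h]
    · simp [hsgndef, h, abs_of_nonneg (not_lt.mp h)]
  have hWD : W * D = V' * diagonal (fun i => ((|lam i| : ℝ) : ℂ)) * V'ᴴ := by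
    conv_lhs => rw [hWdef, hspec]
    rw [show V' * diagonal sgn * V'ᴴ * (V' * diagonal (Complex.ofReal ∘ lam) * V'ᴴ)
        = V' * diagonal sgn * (V'ᴴ * V') * diagonal (Complex.ofReal ∘ lam) * V'ᴴ by
      simp only [Matrix.mul_assoc], star_mul_self_unitary hVu, Matrix.mul_one,
      Matrix.mul_assoc (V' * diagonal sgn)]
    rw [show V' * diagonal sgn * (diagonal (Complex.ofReal ∘ lam) * V'ᴴ)
        = V' * (diagonal sgn * diagonal (Complex.ofReal ∘ lam)) * V'ᴴ by
      simp only [Matrix.mul_assoc], diagonal_mul_diagonal]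
    rw [show (fun i => sgn i * (Complex.ofReal ∘ lam) i) = fun i => ((|lam i| : ℝ) : ℂ) from
      funext fun i => habs i]
  have hDW : D * W = V' * diagonal (fun i => ((|lam i| : ℝ) : ℂ)) * V'ᴴ := by
    conv_lhs => rw [hWdef, hspec]
    rw [show V' * diagonal (Complex.ofReal ∘ lam) * V'ᴴ * (V' * diagonal sgn * V'ᴴ)
        = V' * diagonal (Complex.ofReal ∘ lam) * (V'ᴴ * V') * diagonal sgn * V'ᴴ by
      simp only [Matrix.mul_assoc], star_mul_self_unitary hVu, Matrix.mul_one,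
      Matrix.mul_assoc (V' * diagonal (Complex.ofReal ∘ lam))]
    rw [show V' * diagonal (Complex.ofReal ∘ lam) * (diagonal sgn * V'ᴴ)
        = V' * (diagonal (Complex.ofReal ∘ lam) * diagonal sgn) * V'ᴴ by
      simp only [Matrix.mul_assoc], diagonal_mul_diagonal]
    rw [show (fun i => (Complex.ofReal ∘ lam) i * sgn i) = fun i => ((|lam i| : ℝ) : ℂ) from
      funext fun i => by rw [mul_comm]; exact habs i]
  -- key matrix identity
  have hid : D * B' + B' * D = 2 • (S * S - T * T) := by
    rw [hDdef, hB'def]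
    noncomm_ring
  -- trace of W * (S*S - T*T)
  have htr1 : (W * (S * S - T * T)).trace
      = (V' * diagonal (fun i => ((|lam i| : ℝ) : ℂ)) * V'ᴴ * B').trace := by
    have h2 : (W * (D * B' + B' * D)).trace = 2 • (W * (S * S - T * T)).trace := by
      rw [hid, Matrix.mul_smul, Matrix.trace_smul]
    rw [Matrix.mul_add, Matrix.trace_add] at h2
    have hA1 : (W * (D * B')).trace = (V' * diagonal (fun i => ((|lam i| : ℝ) : ℂ)) * V'ᴴ * B').trace := by
      rw [← Matrix.mul_assoc, hWD]
    have hA2 : (W * (B' * D)).trace = (V' * diagonal (fun i => ((|lam i| : ℝ) : ℂ)) * V'ᴴ * B').trace := by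
      calc (W * (B' * D)).trace = ((W * B') * D).trace := by rw [← Matrix.mul_assoc]
        _ = (D * (W * B')).trace := Matrix.trace_mul_comm _ _
        _ = ((D * W) * B').trace := by rw [← Matrix.mul_assoc]
        _ = _ := by rw [hDW]
    rw [hA1, hA2] at h2
    rw [nsmul_eq_mul] at h2
    push_cast at h2
    linear_combination -h2 / 2
  -- diagonalized forms
  have hsand : V'ᴴ * D * V' = diagonal (Complex.ofReal ∘ lam) := by
    rw [← Matrix.star_eq_conjTranspose]
    exact herm_diag hD
  have hDD : ((S - T) * (S - T)).trace.re = ∑ i, lam i ^ 2 := by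
    have e1 : (S - T) * (S - T) = (V' * diagonal (Complex.ofReal ∘ lam) * V'ᴴ) * D := by
      rw [← hspec]
    rw [e1, trace_sandwich_diag_mul, hsand]
    rw [Complex.re_sum]
    refine Finset.sum_congr rfl fun i _ => ?_
    simp only [diagonal_apply_eq, Function.comp]
    rw [← Complex.ofReal_mul]
    rw [Complex.ofReal_re]
    ring
  have hbound : ∀ i, |lam i| ≤ ((V'ᴴ * B' * V') i i).re := by
    intro i
    have hexp : ∀ G : Matrix n n ℂ, V'ᴴ * (B' + G) * V' = V'ᴴ * B' * V' + V'ᴴ * G * V' := by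
      intro G
      rw [Matrix.mul_add, Matrix.add_mul]
    have hplus : 0 ≤ ((V'ᴴ * (B' + D) * V') i i).re := by
      have hBD : B' + D = S + S := by rw [hB'def, hDdef]; abel
      exact psd_sandwich_diag_re (hBD ▸ (hS.add hS)) V' i
    have hminus : 0 ≤ ((V'ᴴ * (B' + -D) * V') i i).re := by
      have hBD : B' + -D = T + T := by rw [hB'def, hDdef]; abel
      exact psd_sandwich_diag_re (hBD ▸ (hT.add hT)) V' i
    have hDentry : ((V'ᴴ * D * V') i i).re = lam i := by
      rw [hsand]; simp
    have hNentry : ((V'ᴴ * (-D) * V') i i).re = -lam i := by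
      rw [show V'ᴴ * (-D) * V' = -(V'ᴴ * D * V') by simp [Matrix.mul_neg, Matrix.neg_mul],
        Matrix.neg_apply, Complex.neg_re, hDentry]
    rw [hexp D, Matrix.add_apply, Complex.add_re, hDentry] at hplus
    rw [hexp (-D), Matrix.add_apply, Complex.add_re, hNentry] at hminus
    rw [abs_le]
    constructor <;> linarith
  have htr2 : ((V' * diagonal (fun i => ((|lam i| : ℝ) : ℂ)) * V'ᴴ * B').trace).re
      = ∑ i, ((V'ᴴ * B' * V') i i).re * |lam i| := by
    rw [trace_sandwich_diag_mul, Complex.re_sum]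
    refine Finset.sum_congr rfl fun i _ => ?_
    rw [Complex.mul_re]
    simp
  calc ((S - T) * (S - T)).trace.re = ∑ i, lam i ^ 2 := hDD
    _ ≤ ∑ i, ((V'ᴴ * B' * V') i i).re * |lam i| := by
        refine Finset.sum_le_sum fun i _ => ?_
        have h1 := hbound i
        have h2 : |lam i| * |lam i| = lam i ^ 2 := by
          rw [← abs_mul, abs_mul_self]; ring
        nlinarith [abs_nonneg (lam i)]
    _ = ((W * (S * S - T * T)).trace).re := by rw [htr1, htr2]
    _ ≤ traceNorm (S * S - T * T) := re_trace_unitary_mul_le W _ hWu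

lemma psd_trace_re_nonneg {A : Matrix n n ℂ} (h : A.PosSemidef) : 0 ≤ A.trace.re := by
  rw [trace_hermitian h.1, Complex.re_sum]
  refine Finset.sum_nonneg fun i _ => ?_
  simpa using h.eigenvalues_nonneg i

lemma herm_trace_im {A : Matrix n n ℂ} (h : A.IsHermitian) : A.trace.im = 0 := by
  rw [trace_hermitian h, Complex.im_sum]
  simp

lemma re_trace_expand_sub (X Y : Matrix n n ℂ) :
    (((X - Y)ᴴ * (X - Y)).trace).re
      = ((Xᴴ * X).trace).re + ((Yᴴ * Y).trace).re - 2 * ((Yᴴ * X).trace).re := by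
  have hexp : (X - Y)ᴴ * (X - Y) = Xᴴ * X - Xᴴ * Y - Yᴴ * X + Yᴴ * Y := by
    rw [conjTranspose_sub]
    noncomm_ring
  have hsw : ((Xᴴ * Y).trace).re = ((Yᴴ * X).trace).re := by
    have h1 : (Xᴴ * Y).trace = star ((Yᴴ * X).trace) := by
      rw [← Matrix.trace_conjTranspose, conjTranspose_mul, conjTranspose_conjTranspose]
    rw [h1, Complex.star_def, Complex.conj_re]
  rw [hexp, Matrix.trace_add, Matrix.trace_sub, Matrix.trace_sub, Complex.add_re,
    Complex.sub_re, Complex.sub_re, hsw]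
  ring

lemma re_trace_expand_add (X Y : Matrix n n ℂ) :
    (((X + Y)ᴴ * (X + Y)).trace).re
      = ((Xᴴ * X).trace).re + ((Yᴴ * Y).trace).re + 2 * ((Yᴴ * X).trace).re := by
  have hexp : (X + Y)ᴴ * (X + Y) = Xᴴ * X + Xᴴ * Y + Yᴴ * X + Yᴴ * Y := by
    rw [conjTranspose_add]
    noncomm_ring
  have hsw : ((Xᴴ * Y).trace).re = ((Yᴴ * X).trace).re := by
    have h1 : (Xᴴ * Y).trace = star ((Yᴴ * X).trace) := by
      rw [← Matrix.trace_conjTranspose, conjTranspose_mul, conjTranspose_conjTranspose]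
    rw [h1, Complex.star_def, Complex.conj_re]
  rw [hexp, Matrix.trace_add, Matrix.trace_add, Matrix.trace_add, Complex.add_re,
    Complex.add_re, Complex.add_re, hsw]
  ring

lemma traceNorm_neg' (M : Matrix n n ℂ) : traceNorm (-M) = traceNorm M := by
  unfold traceNorm
  rw [show (-M)ᴴ * (-M) = Mᴴ * M by rw [conjTranspose_neg, Matrix.neg_mul, Matrix.mul_neg,
    neg_neg]]

lemma scalar_lower (a b F v T₁ : ℝ) (ha0 : 0 ≤ a) (ha1 : a ≤ 1) (hb0 : 0 ≤ b) (hb1 : b ≤ 1)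
    (hF0 : 0 ≤ F) (hFu : F ≤ Real.sqrt a * Real.sqrt b)
    (hv : v = Real.sqrt ((1 - a) * (1 - b)))
    (hT0 : 0 ≤ T₁) (hT : T₁ ^ 2 ≤ (a + b) ^ 2 - 4 * F ^ 2) :
    (F + v) ^ 2 + T₁ ^ 2 / 4 ≤ 1 := by
  set u := Real.sqrt a * Real.sqrt b with hu
  have hu0 : 0 ≤ u := mul_nonneg (Real.sqrt_nonneg _) (Real.sqrt_nonneg _)
  have hu2 : u ^ 2 = a * b := by
    rw [hu, mul_pow, Real.sq_sqrt ha0, Real.sq_sqrt hb0]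
  have hv0 : 0 ≤ v := hv ▸ Real.sqrt_nonneg _
  have hv2 : v ^ 2 = (1 - a) * (1 - b) := by
    rw [hv, Real.sq_sqrt (mul_nonneg (by linarith) (by linarith))]
  have hR0 : 0 ≤ a + b - a * b - (a + b) ^ 2 / 4 := by
    nlinarith [mul_nonneg ha0 (sub_nonneg.mpr ha1), mul_nonneg hb0 (sub_nonneg.mpr hb1),
      mul_nonneg ha0 (sub_nonneg.mpr hb1), mul_nonneg hb0 (sub_nonneg.mpr ha1)]
  have hsq : (2 * (u * v)) ^ 2 ≤ (a + b - a * b - (a + b) ^ 2 / 4) ^ 2 := by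
    have h4 : (2 * (u * v)) ^ 2 = 4 * (a * b) * ((1 - a) * (1 - b)) := by
      have : (u * v) ^ 2 = (a * b) * ((1 - a) * (1 - b)) := by rw [mul_pow, hu2, hv2]
      nlinarith [this]
    rw [h4]
    nlinarith [mul_nonneg (sq_nonneg (a - b))
      (add_nonneg (by positivity : (0:ℝ) ≤ 12 * (a * b)) (sq_nonneg (4 - a - b)))]
  have huvR : 2 * (u * v) ≤ a + b - a * b - (a + b) ^ 2 / 4 := by
    nlinarith [mul_nonneg hu0 hv0, hsq, hR0]
  have hFv : F * v ≤ u * v := mul_le_mul_of_nonneg_right hFu hv0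
  nlinarith

lemma scalar_upper (a b F v T₁ : ℝ) (ha0 : 0 ≤ a) (ha1 : a ≤ 1) (hb0 : 0 ≤ b) (hb1 : b ≤ 1)
    (hF0 : 0 ≤ F) (hv : v = Real.sqrt ((1 - a) * (1 - b))) (hT0 : 0 ≤ T₁)
    (hPS : a + b - 2 * F ≤ T₁) :
    1 - (F + v) ^ 2 ≤ T₁ + |a - b| := by
  have hv0 : 0 ≤ v := hv ▸ Real.sqrt_nonneg _
  have habs : 2 - a - b - |a - b| ≤ 2 * v := by
    rcases le_total a b with hab | hab
    · rw [abs_of_nonpos (by linarith)]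
      have : (1 - b : ℝ) ≤ v := by
        rw [hv]
        calc (1 - b : ℝ) = Real.sqrt ((1 - b) * (1 - b)) :=
              (Real.sqrt_mul_self (by linarith)).symm
          _ ≤ Real.sqrt ((1 - a) * (1 - b)) :=
              Real.sqrt_le_sqrt (mul_le_mul_of_nonneg_right (by linarith) (by linarith))
      linarith
    · rw [abs_of_nonneg (by linarith)]
      have : (1 - a : ℝ) ≤ v := by
        rw [hv]
        calc (1 - a : ℝ) = Real.sqrt ((1 - a) * (1 - a)) :=
              (Real.sqrt_mul_self (by linarith)).symm
          _ ≤ Real.sqrt ((1 - a) * (1 - b)) :=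
              Real.sqrt_le_sqrt (mul_le_mul_of_nonneg_left (by linarith) (by linarith))
      linarith
  rcases le_or_gt 1 (F + v) with hc | hc
  · have : 1 ≤ (F + v) ^ 2 := by nlinarith
    have : 0 ≤ |a - b| := abs_nonneg _
    nlinarith
  · nlinarith

end AuxLemmas

open Finset
set_option linter.unusedSectionVars false

/-- For subnormalized states,
`(1/2)‖ρ − σ‖₁ ≤ P(ρ,σ) ≤ √(‖ρ − σ‖₁ + |tr ρ − tr σ|)`. -/
theorem purifiedDist_bounds {n : Type*} [Fintype n] [DecidableEq n]
    (ρ σ : Matrix n n ℂ) (hρ : ρ.PosSemidef) (hσ : σ.PosSemidef)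
    (hρ1 : ρ.trace.re ≤ 1) (hσ1 : σ.trace.re ≤ 1) :
    (1 / 2) * traceNorm (ρ - σ) ≤ purifiedDist ρ σ ∧
    purifiedDist ρ σ ≤ Real.sqrt (traceNorm (ρ - σ) + |ρ.trace.re - σ.trace.re|) := by
  classical
  have hS : (msqrt ρ).PosSemidef := msqrt_posSemidef hρ
  have hT : (msqrt σ).PosSemidef := msqrt_posSemidef hσ
  set S := msqrt ρ with hSdef
  set T := msqrt σ with hTdef
  have hSS : S * S = ρ := msqrt_mul_self hρ
  have hTT : T * T = σ := msqrt_mul_self hσ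
  have hSH : Sᴴ = S := hS.1
  have hTH : Tᴴ = T := hT.1
  set a := ρ.trace.re with hadef
  set b := σ.trace.re with hbdef
  have ha0 : 0 ≤ a := psd_trace_re_nonneg hρ
  have hb0 : 0 ≤ b := psd_trace_re_nonneg hσ
  set F := fidelity ρ σ with hFdef
  have hFtn : F = traceNorm (S * T) := rfl
  have hF0 : 0 ≤ F := by rw [hFtn]; exact traceNorm_nonneg _
  obtain ⟨W, hWu, hWM⟩ := polar (S * T)
  have hWsq : Wᴴ * (S * T) = msqrt ((S * T)ᴴ * (S * T)) := by
    conv_lhs => rw [hWM]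
    rw [← Matrix.mul_assoc, star_mul_self_unitary hWu, Matrix.one_mul]
  have hFtr : ((Wᴴ * (S * T)).trace).re = F := by
    rw [hWsq]; exact hFtn.symm
  set B := S * W with hBdef
  have hBT : Bᴴ * T = Wᴴ * (S * T) := by
    rw [hBdef, conjTranspose_mul, hSH, Matrix.mul_assoc]
  have hBTF : ((Bᴴ * T).trace).re = F := by rw [hBT]; exact hFtr
  have hBB : ((Bᴴ * B).trace).re = a := by
    have h : (Bᴴ * B).trace = ρ.trace := by
      rw [hBdef, conjTranspose_mul, hSH]
      calc (Wᴴ * S * (S * W)).trace = ((Wᴴ * (S * S)) * W).trace := by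
            simp only [Matrix.mul_assoc]
        _ = (W * (Wᴴ * (S * S))).trace := Matrix.trace_mul_comm _ _
        _ = ((W * Wᴴ) * (S * S)).trace := by rw [Matrix.mul_assoc]
        _ = ρ.trace := by rw [self_mul_star_unitary hWu, Matrix.one_mul, hSS]
    rw [h]
  have hTT2 : ((Tᴴ * T).trace).re = b := by rw [hTH, hTT]
  have hFab : F ≤ Real.sqrt a * Real.sqrt b := by
    have h1 := re_trace_CS B T
    rw [hBTF, hBB, hTT2] at h1
    exact h1
  set G₁ := T - B with hG₁def
  set G₂ := T + B with hG₂def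
  have hG1 : ((G₁ᴴ * G₁).trace).re = a + b - 2 * F := by
    rw [hG₁def, re_trace_expand_sub T B, hBB, hTT2, hBTF]; ring
  have hG2 : ((G₂ᴴ * G₂).trace).re = a + b + 2 * F := by
    rw [hG₂def, re_trace_expand_add T B, hBB, hTT2, hBTF]; ring
  have hG1nn : 0 ≤ a + b - 2 * F := by
    rw [← hG1]; exact trace_conj_mul_self_re_nonneg G₁
  have hG2nn : 0 ≤ a + b + 2 * F := by
    rw [← hG2]; exact trace_conj_mul_self_re_nonneg G₂
  set T₁ := traceNorm (ρ - σ) with hT₁def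
  have hT10 : 0 ≤ T₁ := traceNorm_nonneg _
  have hT1neg : traceNorm (σ - ρ) = T₁ := by
    rw [hT₁def, ← neg_sub ρ σ, traceNorm_neg']
  obtain ⟨U₂, hU₂u, hU₂M⟩ := polar (σ - ρ)
  have hU₂sq : U₂ᴴ * (σ - ρ) = msqrt ((σ - ρ)ᴴ * (σ - ρ)) := by
    conv_lhs => rw [hU₂M]
    rw [← Matrix.mul_assoc, star_mul_self_unitary hU₂u, Matrix.one_mul]
  have hU₂tr : ((U₂ᴴ * (σ - ρ)).trace).re = T₁ := by
    rw [hU₂sq]; exact hT1neg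
  have hBBH : B * Bᴴ = ρ := by
    rw [hBdef, conjTranspose_mul, hSH,
      show S * W * (Wᴴ * S) = S * (W * Wᴴ) * S by simp only [Matrix.mul_assoc],
      self_mul_star_unitary hWu, Matrix.mul_one, hSS]
  have hTTH : T * Tᴴ = σ := by rw [hTH, hTT]
  have hdecomp : G₁ * G₂ᴴ + G₂ * G₁ᴴ = (σ - ρ) + (σ - ρ) := by
    have h1 : G₁ * G₂ᴴ + G₂ * G₁ᴴ = (T * Tᴴ - B * Bᴴ) + (T * Tᴴ - B * Bᴴ) := by
      rw [hG₁def, hG₂def, conjTranspose_add, conjTranspose_sub]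
      noncomm_ring
    rw [h1, hTTH, hBBH]
  have hsplit : ((U₂ᴴ * (G₁ * G₂ᴴ)).trace) + ((U₂ᴴ * (G₂ * G₁ᴴ)).trace)
      = (U₂ᴴ * (σ - ρ)).trace + (U₂ᴴ * (σ - ρ)).trace := by
    rw [← Matrix.trace_add, ← Matrix.mul_add, hdecomp, Matrix.mul_add, Matrix.trace_add]
  have hbound1 : ((U₂ᴴ * (G₁ * G₂ᴴ)).trace).re
      ≤ Real.sqrt (a + b - 2 * F) * Real.sqrt (a + b + 2 * F) := by
    have e : (U₂ᴴ * (G₁ * G₂ᴴ)).trace = ((U₂ * G₂)ᴴ * G₁).trace := by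
      rw [conjTranspose_mul]
      calc (U₂ᴴ * (G₁ * G₂ᴴ)).trace = ((G₁ * G₂ᴴ) * U₂ᴴ).trace := Matrix.trace_mul_comm _ _
        _ = (G₁ * (G₂ᴴ * U₂ᴴ)).trace := by rw [Matrix.mul_assoc]
        _ = ((G₂ᴴ * U₂ᴴ) * G₁).trace := Matrix.trace_mul_comm _ _
    have hg : (U₂ * G₂)ᴴ * (U₂ * G₂) = G₂ᴴ * G₂ := by
      rw [conjTranspose_mul,
        show G₂ᴴ * U₂ᴴ * (U₂ * G₂) = G₂ᴴ * (U₂ᴴ * U₂) * G₂ by simp only [Matrix.mul_assoc],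
        star_mul_self_unitary hU₂u, Matrix.mul_one]
    have h1 := re_trace_CS (U₂ * G₂) G₁
    rw [hg, hG2, hG1] at h1
    rw [e]
    exact h1.trans (le_of_eq (by ring))
  have hbound2 : ((U₂ᴴ * (G₂ * G₁ᴴ)).trace).re
      ≤ Real.sqrt (a + b - 2 * F) * Real.sqrt (a + b + 2 * F) := by
    have e : (U₂ᴴ * (G₂ * G₁ᴴ)).trace = ((U₂ * G₁)ᴴ * G₂).trace := by
      rw [conjTranspose_mul]
      calc (U₂ᴴ * (G₂ * G₁ᴴ)).trace = ((G₂ * G₁ᴴ) * U₂ᴴ).trace := Matrix.trace_mul_comm _ _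
        _ = (G₂ * (G₁ᴴ * U₂ᴴ)).trace := by rw [Matrix.mul_assoc]
        _ = ((G₁ᴴ * U₂ᴴ) * G₂).trace := Matrix.trace_mul_comm _ _
    have hg : (U₂ * G₁)ᴴ * (U₂ * G₁) = G₁ᴴ * G₁ := by
      rw [conjTranspose_mul,
        show G₁ᴴ * U₂ᴴ * (U₂ * G₁) = G₁ᴴ * (U₂ᴴ * U₂) * G₁ by simp only [Matrix.mul_assoc],
        star_mul_self_unitary hU₂u, Matrix.mul_one]
    have h1 := re_trace_CS (U₂ * G₁) G₂
    rw [hg, hG1, hG2] at h1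
    rw [e]
    exact h1
  have hT1le : T₁ ≤ Real.sqrt (a + b - 2 * F) * Real.sqrt (a + b + 2 * F) := by
    have h1 := congrArg Complex.re hsplit
    rw [Complex.add_re, Complex.add_re, hU₂tr] at h1
    linarith
  have hT1sq : T₁ ^ 2 ≤ (a + b) ^ 2 - 4 * F ^ 2 := by
    have h2 : T₁ ^ 2 ≤ (Real.sqrt (a + b - 2 * F) * Real.sqrt (a + b + 2 * F)) ^ 2 :=
      pow_le_pow_left₀ hT10 hT1le 2
    rw [mul_pow, Real.sq_sqrt hG1nn, Real.sq_sqrt hG2nn] at h2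
    nlinarith [h2]
  have hPS : a + b - 2 * F ≤ T₁ := by
    have h1 := powers_stormer hS hT
    rw [hSS, hTT] at h1
    have hg : ((S * T).trace).re ≤ F := by
      have h2 := re_trace_unitary_mul_le 1 (S * T) (one_mem _)
      rw [Matrix.one_mul] at h2
      rw [hFtn]
      exact h2
    have hDD : ((S - T) * (S - T)).trace.re = a + b - 2 * ((S * T).trace).re := by
      have hh : (S - T)ᴴ = S - T := by rw [conjTranspose_sub, hSH, hTH]
      rw [show (S - T) * (S - T) = (S - T)ᴴ * (S - T) by rw [hh], re_trace_expand_sub S T]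
      have e1 : ((Sᴴ * S).trace).re = a := by rw [hSH, hSS]
      have e2 : ((Tᴴ * S).trace).re = ((S * T).trace).re := by
        rw [hTH, Matrix.trace_mul_comm]
      rw [e1, hTT2, e2]
    rw [hDD] at h1
    linarith
  set v := Real.sqrt ((1 - a) * (1 - b)) with hvdef
  have hgen : genFidelity ρ σ = F + v := rfl
  constructor
  · have hkey := scalar_lower a b F v T₁ ha0 hρ1 hb0 hσ1 hF0 hFab hvdef hT10 hT1sq
    rw [purifiedDist, hgen]
    have h1 : (1 / 2) * T₁ = Real.sqrt (T₁ ^ 2 / 4) := by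
      rw [show T₁ ^ 2 / 4 = (T₁ / 2) ^ 2 by ring, Real.sqrt_sq (by linarith)]
      ring
    rw [show (1 / 2) * traceNorm (ρ - σ) = (1 / 2) * T₁ from rfl, h1]
    exact Real.sqrt_le_sqrt (by linarith)
  · have hkey := scalar_upper a b F v T₁ ha0 hρ1 hb0 hσ1 hF0 hvdef hT10 hPS
    rw [purifiedDist, hgen]
    exact Real.sqrt_le_sqrt (by linarith)


end
end
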